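/- arXiv:0910.5098 — 5 statements merged into one kernel-verified Lean document; each statement's English description precedes it below -/
import Mathlib

section
/- Let n be a positive integer, A₋₁ an invertible n×n complex matrix with distinct eigenvalues μ₁,…,μ_ℓ, let A₂, A₃ : [-1,0] → ℂ^{n×n} have square-integrable entries, and let Δ(λ) be the characteristic matrix function. Let r > 0 satisfy 3r ≤ |λ_m^{(k)} − λ_i^{(j)}| for all pairs (m,k) ≠ (i,j), where λ_m^{(k)} = ln|μ_m| + i(arg μ_m + 2πk). Then the set of zeros of det Δ that lie outside the union over all m ∈ {1,…,ℓ} and all k ∈ ℤ of the closed discs of radius r centered at λ_m^{(k)} is finite. -/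
open MeasureTheory Complex Set Metric
open Filter Topology

/-- The characteristic matrix function `Δ(λ)` of the neutral type system. -/
noncomputable def Delta {n : ℕ} (Am1 : Matrix (Fin n) (Fin n) ℂ)
    (A2 A3 : ℝ → Matrix (Fin n) (Fin n) ℂ) (lam : ℂ) : Matrix (Fin n) (Fin n) ℂ :=
  (-lam) • (1 : Matrix (Fin n) (Fin n) ℂ)
    + (lam * Complex.exp (-lam)) • Am1
    + lam • Matrix.of (fun i j => ∫ s in Set.Ioc (-1:ℝ) 0, Complex.exp (lam * s) * A2 s i j)
    + Matrix.of (fun i j => ∫ s in Set.Ioc (-1:ℝ) 0, Complex.exp (lam * s) * A3 s i j)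

/-- The chain points `λ_m^{(k)} = ln|μ| + i(arg μ + 2πk)`. -/
noncomputable def chainPoint (μ : ℂ) (k : ℤ) : ℂ :=
  (Real.log ‖μ‖ : ℂ) + Complex.I * ((μ.arg : ℂ) + 2 * Real.pi * k)

noncomputable def mI : Measure ℝ := volume.restrict (Set.Ioc (-1:ℝ) 0)

instance : IsFiniteMeasure mI :=
  ⟨by simp [mI, Measure.restrict_apply_univ, Real.volume_Ioc]⟩

lemma integrable_of_L2 {g : ℝ → ℂ} (hg : MemLp g 2 mI) : Integrable g mI :=
  memLp_one_iff_integrable.mp (hg.mono_exponent (by norm_num))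

lemma norm_exp_mul (z : ℂ) (s : ℝ) : ‖Complex.exp (z * s)‖ = Real.exp (z.re * s) := by
  rw [Complex.norm_exp]
  congr 1
  simp [Complex.mul_re]

lemma cont_exp_mul (z : ℂ) : Continuous (fun s : ℝ => Complex.exp (z * s)) :=
  Complex.continuous_exp.comp (continuous_const.mul Complex.continuous_ofReal)

lemma asm_exp_mul {g : ℝ → ℂ} (hg : Integrable g mI) (z : ℂ) :
    AEStronglyMeasurable (fun s : ℝ => Complex.exp (z * s) * g s) mI :=
  ((cont_exp_mul z).aestronglyMeasurable).mul hg.aestronglyMeasurable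

lemma integrable_exp_mul {g : ℝ → ℂ} (hg : Integrable g mI) (z : ℂ) :
    Integrable (fun s : ℝ => Complex.exp (z * s) * g s) mI := by
  refine Integrable.mono' (hg.norm.const_mul (Real.exp |z.re|)) (asm_exp_mul hg z) ?_
  filter_upwards [ae_restrict_mem (measurableSet_Ioc : MeasurableSet (Set.Ioc (-1:ℝ) 0))] with s hs
  rw [norm_mul, norm_exp_mul]
  gcongr
  calc z.re * s ≤ |z.re * s| := le_abs_self _
    _ = |z.re| * |s| := abs_mul _ _
    _ ≤ |z.re| * 1 := by
        gcongr
        rw [abs_le]; constructor <;> [linarith [hs.1]; linarith [hs.2]]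
    _ = |z.re| := mul_one _

/-- bound on the entry integral -/
lemma norm_intEnt_le {g : ℝ → ℂ} (hg : Integrable g mI) {z : ℂ} {B : ℝ}
    (h : ∀ s ∈ Set.Ioc (-1:ℝ) 0, z.re * s ≤ B) :
    ‖∫ s in Set.Ioc (-1:ℝ) 0, Complex.exp (z * s) * g s‖
      ≤ Real.exp B * ∫ s in Set.Ioc (-1:ℝ) 0, ‖g s‖ := by
  have := norm_integral_le_of_norm_le (μ := mI)
    (f := fun s : ℝ => Complex.exp (z * s) * g s)
    (g := fun s => Real.exp B * ‖g s‖) (hg.norm.const_mul _) ?_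
  · calc ‖∫ s in Set.Ioc (-1:ℝ) 0, Complex.exp (z * s) * g s‖
        ≤ ∫ s, Real.exp B * ‖g s‖ ∂mI := this
      _ = Real.exp B * ∫ s in Set.Ioc (-1:ℝ) 0, ‖g s‖ := by
          rw [integral_const_mul]; rfl
  · filter_upwards [ae_restrict_mem (measurableSet_Ioc : MeasurableSet (Set.Ioc (-1:ℝ) 0))] with s hs
    rw [norm_mul, norm_exp_mul]
    exact mul_le_mul_of_nonneg_right (Real.exp_le_exp.2 (h s hs)) (norm_nonneg _)

/-- a.e. in `mI`, `s` is in the open interval. -/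
lemma ae_mem_Ioo : ∀ᵐ s ∂mI, s ∈ Set.Ioo (-1:ℝ) 0 := by
  have h1 : ∀ᵐ s ∂mI, s ∈ Set.Ioc (-1:ℝ) 0 := ae_restrict_mem measurableSet_Ioc
  have h2 : ∀ᵐ s ∂mI, s ≠ 0 := by
    rw [ae_iff]
    have : {s : ℝ | ¬ s ≠ 0} = {0} := by ext s; simp
    rw [this, mI, Measure.restrict_apply (measurableSet_singleton 0)]
    exact measure_mono_null Set.inter_subset_left (Real.volume_singleton)
  filter_upwards [h1, h2] with s hs hs0
  exact ⟨hs.1, lt_of_le_of_ne hs.2 hs0⟩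

/-- Convergence: `Re z → +∞`. -/
lemma tendsto_intEnt_right {g : ℝ → ℂ} (hg : Integrable g mI) {u : ℕ → ℂ}
    (hu : Tendsto (fun j => (u j).re) atTop atTop) :
    Tendsto (fun j => ∫ s in Set.Ioc (-1:ℝ) 0, Complex.exp (u j * s) * g s) atTop (𝓝 0) := by
  have h : Tendsto (fun j => ∫ s, Complex.exp (u j * s) * g s ∂mI) atTop
      (𝓝 (∫ (_ : ℝ), (0:ℂ) ∂mI)) := by
    refine tendsto_integral_filter_of_dominated_convergence (fun s => ‖g s‖)
      (Eventually.of_forall fun j => asm_exp_mul hg (u j)) ?_ hg.norm ?_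
    · filter_upwards [hu.eventually_ge_atTop 0] with j hj
      filter_upwards [ae_restrict_mem (measurableSet_Ioc : MeasurableSet (Set.Ioc (-1:ℝ) 0))] with s hs
      rw [norm_mul, norm_exp_mul]
      have : Real.exp ((u j).re * s) ≤ 1 :=
        Real.exp_le_one_iff.2 (mul_nonpos_of_nonneg_of_nonpos hj hs.2)
      calc Real.exp ((u j).re * s) * ‖g s‖ ≤ 1 * ‖g s‖ :=
            mul_le_mul_of_nonneg_right this (norm_nonneg _)
        _ = ‖g s‖ := one_mul _
    · filter_upwards [ae_mem_Ioo] with s hs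
      rw [tendsto_zero_iff_norm_tendsto_zero]
      have h1 : Tendsto (fun j => (u j).re * s) atTop atBot := hu.atTop_mul_const_of_neg hs.2
      have h2 : Tendsto (fun j => Real.exp ((u j).re * s)) atTop (𝓝 0) :=
        Real.tendsto_exp_atBot.comp h1
      have h3 := h2.mul_const ‖g s‖
      rw [zero_mul] at h3
      refine h3.congr fun j => ?_
      rw [norm_mul, norm_exp_mul]
  simpa [mI] using h

/-- Convergence: `Re z → -∞`, with the `e^z` factor. -/
lemma tendsto_intEnt_left {g : ℝ → ℂ} (hg : Integrable g mI) {u : ℕ → ℂ}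
    (hu : Tendsto (fun j => (u j).re) atTop atBot) :
    Tendsto (fun j => Complex.exp (u j) *
      ∫ s in Set.Ioc (-1:ℝ) 0, Complex.exp (u j * s) * g s) atTop (𝓝 0) := by
  have key : ∀ j, Complex.exp (u j) * ∫ s in Set.Ioc (-1:ℝ) 0, Complex.exp (u j * s) * g s
      = ∫ s, Complex.exp (u j * (s+1:ℝ)) * g s ∂mI := by
    intro j
    rw [← integral_const_mul]
    refine integral_congr_ae (Eventually.of_forall fun s => ?_)
    dsimp only
    rw [← mul_assoc, ← Complex.exp_add]
    congr 2
    push_cast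
    ring
  have h : Tendsto (fun j => ∫ s, Complex.exp (u j * (s+1:ℝ)) * g s ∂mI) atTop
      (𝓝 (∫ (_ : ℝ), (0:ℂ) ∂mI)) := by
    refine tendsto_integral_filter_of_dominated_convergence (fun s => ‖g s‖) ?_ ?_ hg.norm ?_
    · refine Eventually.of_forall fun j => ?_
      have : Continuous (fun s : ℝ => Complex.exp (u j * (s+1:ℝ))) :=
        Complex.continuous_exp.comp (continuous_const.mul (by continuity))
      exact this.aestronglyMeasurable.mul hg.aestronglyMeasurable
    · filter_upwards [hu.eventually_le_atBot 0] with j hj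
      filter_upwards [ae_restrict_mem (measurableSet_Ioc : MeasurableSet (Set.Ioc (-1:ℝ) 0))] with s hs
      rw [norm_mul, norm_exp_mul]
      have : Real.exp ((u j).re * (s+1)) ≤ 1 :=
        Real.exp_le_one_iff.2 (mul_nonpos_of_nonpos_of_nonneg hj (by linarith [hs.1]))
      calc Real.exp ((u j).re * (s+1)) * ‖g s‖ ≤ 1 * ‖g s‖ :=
            mul_le_mul_of_nonneg_right this (norm_nonneg _)
        _ = ‖g s‖ := one_mul _
    · filter_upwards [ae_restrict_mem (measurableSet_Ioc : MeasurableSet (Set.Ioc (-1:ℝ) 0))] with s hs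
      rw [tendsto_zero_iff_norm_tendsto_zero]
      have h1 : Tendsto (fun j => (u j).re * (s+1)) atTop atBot :=
        hu.atBot_mul_const (by linarith [hs.1])
      have h2 : Tendsto (fun j => Real.exp ((u j).re * (s+1))) atTop (𝓝 0) :=
        Real.tendsto_exp_atBot.comp h1
      have h3 := h2.mul_const ‖g s‖
      rw [zero_mul] at h3
      refine h3.congr fun j => ?_
      rw [norm_mul, norm_exp_mul]
  have h2 := h
  rw [show (∫ (_ : ℝ), (0:ℂ) ∂mI) = 0 by simp] at h2
  exact Tendsto.congr (fun j => (key j).symm) h2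

lemma tendsto_cocompact_real {w : ℕ → ℝ} (h : Tendsto (fun j => |w j|) atTop atTop) :
    Tendsto w atTop (cocompact ℝ) := by
  rw [cocompact_eq_atBot_atTop]
  intro S hS
  rw [Filter.mem_sup] at hS
  obtain ⟨h1, h2⟩ := hS
  obtain ⟨a, ha⟩ := Filter.mem_atBot_sets.1 h1
  obtain ⟨b, hb⟩ := Filter.mem_atTop_sets.1 h2
  have : ∀ᶠ j in atTop, max (-a) b ≤ |w j| := h.eventually_ge_atTop _
  rw [Filter.mem_map]
  refine Filter.mem_of_superset this fun j hj => ?_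
  simp only [Set.mem_setOf_eq] at hj
  rcases le_abs.1 hj with hj' | hj'
  · exact hb _ (le_trans (le_max_right _ _) hj')
  · exact ha _ (by
      have : -(w j) ≥ -a := le_trans (le_max_left _ _) hj'
      linarith)

/-- Riemann-Lebesgue part: fixed real part, imaginary part to infinity. -/
lemma tendsto_intEnt_mid {g : ℝ → ℂ} (hg : Integrable g mI) {u : ℕ → ℂ} {xs : ℝ}
    (hre : Tendsto (fun j => (u j).re) atTop (𝓝 xs))
    (him : Tendsto (fun j => |(u j).im|) atTop atTop) :
    Tendsto (fun j => ∫ s in Set.Ioc (-1:ℝ) 0, Complex.exp (u j * s) * g s) atTop (𝓝 0) := by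
  -- the comparison integral with frozen real part
  set V : ℕ → ℂ := fun j =>
    ∫ s in Set.Ioc (-1:ℝ) 0, Complex.exp ((xs + (u j).im * Complex.I) * s) * g s with hV
  have hxsre : ∀ j, ((xs : ℂ) + (u j).im * Complex.I).re = xs := by intro j; simp
  -- Part b : V → 0 by Riemann-Lebesgue
  have hb : Tendsto V atTop (𝓝 0) := by
    set h : ℝ → ℂ := Set.indicator (Set.Ioc (-1:ℝ) 0)
      (fun s : ℝ => Complex.exp (xs * s) * g s) with hh
    have key := Real.tendsto_integral_exp_smul_cocompact h
    have hw : Tendsto (fun j => -(u j).im / (2 * Real.pi)) atTop (cocompact ℝ) := by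
      apply tendsto_cocompact_real
      have : Tendsto (fun j => |(u j).im| * (2 * Real.pi)⁻¹) atTop atTop :=
        him.atTop_mul_const (by positivity)
      refine this.congr fun j => ?_
      rw [abs_div, abs_neg, abs_of_pos (by positivity : (0:ℝ) < 2 * Real.pi), div_eq_mul_inv]
    have comp := key.comp hw
    rw [show (0 : ℂ) = 0 from rfl] at comp
    refine Tendsto.congr ?_ comp
    intro j
    show ∫ v : ℝ, Real.fourierChar (-(v * (-(u j).im / (2 * Real.pi)))) • h v = V j
    have step1 : ∀ v : ℝ, Real.fourierChar (-(v * (-(u j).im / (2 * Real.pi)))) • h v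
        = Set.indicator (Set.Ioc (-1:ℝ) 0)
            (fun s : ℝ => Complex.exp ((xs + (u j).im * Complex.I) * s) * g s) v := by
      intro v
      rw [hh]
      by_cases hv : v ∈ Set.Ioc (-1:ℝ) 0
      · rw [Set.indicator_of_mem hv, Set.indicator_of_mem hv]
        simp only [Circle.smul_def, Real.fourierChar_apply, smul_eq_mul]
        rw [← mul_assoc, ← Complex.exp_add]
        congr 2
        have harg : 2 * Real.pi * -(v * (-(u j).im / (2 * Real.pi))) = v * (u j).im := by
          field_simp
        rw [harg]
        push_cast
        ring
      · rw [Set.indicator_of_notMem hv, Set.indicator_of_notMem hv, smul_zero]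
    calc ∫ v : ℝ, Real.fourierChar (-(v * (-(u j).im / (2 * Real.pi)))) • h v
        = ∫ v : ℝ, Set.indicator (Set.Ioc (-1:ℝ) 0)
            (fun s : ℝ => Complex.exp ((xs + (u j).im * Complex.I) * s) * g s) v :=
          integral_congr_ae (Eventually.of_forall step1)
      _ = V j := by rw [integral_indicator measurableSet_Ioc]
  -- Part a : difference → 0
  have hCnn : (0:ℝ) ≤ ∫ s, ‖g s‖ ∂mI := integral_nonneg fun s => norm_nonneg _
  have hdiff0 : Tendsto (fun j => |(u j).re - xs|) atTop (𝓝 0) := by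
    have := (hre.sub_const xs).abs
    simpa using this
  have ha : Tendsto (fun j =>
      (∫ s in Set.Ioc (-1:ℝ) 0, Complex.exp (u j * s) * g s) - V j) atTop (𝓝 0) := by
    have hev : ∀ᶠ j in atTop, |(u j).re - xs| ≤ 1 := by
      have := hdiff0.eventually (ge_mem_nhds (by norm_num : (0:ℝ) < 1))
      exact this.mono fun j hj => hj
    have hgl : Tendsto (fun j => Real.exp |xs| * (2 * |(u j).re - xs|) * ∫ s, ‖g s‖ ∂mI)
        atTop (𝓝 0) := by
      have := ((hdiff0.const_mul 2).const_mul (Real.exp |xs|)).mul_const (∫ s, ‖g s‖ ∂mI)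
      simpa [mul_assoc] using this
    have hbnd : ∀ᶠ j in atTop,
        ‖(∫ s in Set.Ioc (-1:ℝ) 0, Complex.exp (u j * s) * g s) - V j‖
          ≤ Real.exp |xs| * (2 * |(u j).re - xs|) * ∫ s, ‖g s‖ ∂mI := by
      filter_upwards [hev] with j hj
      have hint1 := integrable_exp_mul hg (u j)
      have hint2 := integrable_exp_mul hg ((xs : ℂ) + (u j).im * Complex.I)
      show ‖(∫ s, Complex.exp (u j * s) * g s ∂mI)
          - ∫ s, Complex.exp (((xs:ℂ) + (u j).im * Complex.I) * s) * g s ∂mI‖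
          ≤ Real.exp |xs| * (2 * |(u j).re - xs|) * ∫ s, ‖g s‖ ∂mI
      rw [← integral_sub hint1 hint2]
      have hb2 := norm_integral_le_of_norm_le (μ := mI)
        (f := fun s : ℝ => Complex.exp (u j * s) * g s
            - Complex.exp (((xs:ℂ) + (u j).im * Complex.I) * s) * g s)
        (g := fun s => (Real.exp |xs| * (2 * |(u j).re - xs|)) * ‖g s‖)
        ((hg.norm).const_mul _) ?_
      · calc ‖∫ s, (Complex.exp (u j * s) * g s
              - Complex.exp (((xs:ℂ) + (u j).im * Complex.I) * s) * g s) ∂mI‖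
            ≤ ∫ s, (Real.exp |xs| * (2 * |(u j).re - xs|)) * ‖g s‖ ∂mI := hb2
          _ = Real.exp |xs| * (2 * |(u j).re - xs|) * ∫ s, ‖g s‖ ∂mI := integral_const_mul _ _
      · filter_upwards [ae_restrict_mem (measurableSet_Ioc :
            MeasurableSet (Set.Ioc (-1:ℝ) 0))] with s hs
        have habs : |s| ≤ 1 := by
          rw [abs_le]; constructor <;> [linarith [hs.1]; linarith [hs.2]]
        have hw : |((u j).re - xs) * s| ≤ 1 := by
          calc |((u j).re - xs) * s| = |(u j).re - xs| * |s| := abs_mul _ _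
            _ ≤ 1 * 1 := mul_le_mul hj habs (abs_nonneg _) zero_le_one
            _ = 1 := one_mul _
        have hfactor : Complex.exp (u j * s)
            = Complex.exp (((xs:ℂ) + (u j).im * Complex.I) * s)
              * Complex.exp ((((u j).re - xs) * s : ℝ)) := by
          rw [← Complex.exp_add]
          congr 1
          have hu : ((u j).re : ℂ) + ((u j).im : ℂ) * Complex.I = u j := Complex.re_add_im _
          push_cast
          linear_combination (-(s : ℂ)) * hu
        rw [← sub_mul, norm_mul, hfactor]
        have : ‖Complex.exp (((xs:ℂ) + (u j).im * Complex.I) * s)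
              * Complex.exp ((((u j).re - xs) * s : ℝ))
            - Complex.exp (((xs:ℂ) + (u j).im * Complex.I) * s)‖
            = ‖Complex.exp (((xs:ℂ) + (u j).im * Complex.I) * s)‖
              * ‖Complex.exp ((((u j).re - xs) * s : ℝ)) - 1‖ := by
          rw [← norm_mul, mul_sub, mul_one]
        rw [this]
        have hn1 : ‖Complex.exp (((xs:ℂ) + (u j).im * Complex.I) * s)‖ ≤ Real.exp |xs| := by
          rw [norm_exp_mul, hxsre j]
          refine Real.exp_le_exp.2 ?_
          calc xs * s ≤ |xs * s| := le_abs_self _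
            _ = |xs| * |s| := abs_mul _ _
            _ ≤ |xs| * 1 := mul_le_mul_of_nonneg_left habs (abs_nonneg _)
            _ = |xs| := mul_one _
        have hn2 : ‖Complex.exp ((((u j).re - xs) * s : ℝ)) - 1‖ ≤ 2 * |(u j).re - xs| := by
          rw [← Complex.ofReal_exp, show (1:ℂ) = ((1:ℝ):ℂ) by norm_num, ← Complex.ofReal_sub,
            Complex.norm_real]
          calc |Real.exp (((u j).re - xs) * s) - 1| ≤ 2 * |((u j).re - xs) * s| :=
                Real.abs_exp_sub_one_le hw
            _ = 2 * (|(u j).re - xs| * |s|) := by rw [abs_mul]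
            _ ≤ 2 * (|(u j).re - xs| * 1) := by
                refine mul_le_mul_of_nonneg_left (mul_le_mul_of_nonneg_left habs (abs_nonneg _))
                  (by norm_num)
            _ = 2 * |(u j).re - xs| := by rw [mul_one]
        exact mul_le_mul_of_nonneg_right
          (mul_le_mul hn1 hn2 (norm_nonneg _) (Real.exp_nonneg _)) (norm_nonneg _)
    exact squeeze_zero_norm' hbnd hgl
  have := ha.add hb
  rw [add_zero] at this
  refine this.congr fun j => ?_
  ring

lemma chain_approx {w : ℂ} (hw : w ≠ 0) {u : ℕ → ℂ}
    (hexp : Tendsto (fun j => Complex.exp (u j)) atTop (𝓝 w)) :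
    ∃ k : ℕ → ℤ, Tendsto (fun j => ‖u j - chainPoint w (k j)‖) atTop (𝓝 0) := by
  have habsw : ‖w‖ ≠ 0 := norm_ne_zero_iff.mpr hw
  have habsw' : 0 < ‖w‖ := norm_pos_iff.mpr hw
  -- real parts converge to log |w|
  have hax : Tendsto (fun j => Real.exp ((u j).re)) atTop (𝓝 (‖w‖)) := by
    have := (continuous_norm.tendsto w).comp hexp
    refine this.congr fun j => ?_
    exact Complex.norm_exp _
  have hx : Tendsto (fun j => (u j).re) atTop (𝓝 (Real.log (‖w‖))) := by
    have := ((Real.continuousAt_log habsw).tendsto).comp hax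
    refine this.congr fun j => ?_
    simp [Real.log_exp]
  -- the integer sequence
  set k : ℕ → ℤ := fun j => round (((u j).im - w.arg) / (2 * Real.pi)) with hk
  set t : ℕ → ℝ := fun j => (u j).im - w.arg - 2 * Real.pi * (k j) with ht
  have hπ : (0:ℝ) < Real.pi := Real.pi_pos
  have ht_bd : ∀ j, |t j| ≤ Real.pi := by
    intro j
    have h1 : |((u j).im - w.arg) / (2 * Real.pi) - (k j)| ≤ 1/2 := abs_sub_round _
    have h2 : t j = 2 * Real.pi * (((u j).im - w.arg) / (2 * Real.pi) - (k j)) := by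
      rw [ht]
      field_simp
    rw [h2, abs_mul, abs_of_pos (by positivity : (0:ℝ) < 2 * Real.pi)]
    calc 2 * Real.pi * |((u j).im - w.arg) / (2 * Real.pi) - (k j)|
        ≤ 2 * Real.pi * (1/2) := mul_le_mul_of_nonneg_left h1 (by positivity)
      _ = Real.pi := by ring
  -- exp of the imaginary part converges
  have hxc : Tendsto (fun j => Complex.exp (((u j).re : ℂ))) atTop
      (𝓝 ((‖w‖ : ℂ))) := by
    have := (Complex.continuous_ofReal.tendsto _).comp hax
    refine this.congr fun j => ?_
    simp [Function.comp, Complex.ofReal_exp]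
  have hexpy : Tendsto (fun j => Complex.exp ((u j).im * Complex.I)) atTop
      (𝓝 (Complex.exp (w.arg * Complex.I))) := by
    have hdiv : Tendsto (fun j => Complex.exp (u j) / Complex.exp (((u j).re : ℂ))) atTop
        (𝓝 (w / (‖w‖ : ℂ))) := hexp.div hxc (by exact_mod_cast habsw)
    have heq : ∀ j, Complex.exp (u j) / Complex.exp (((u j).re : ℂ))
        = Complex.exp ((u j).im * Complex.I) := by
      intro j
      rw [div_eq_iff (Complex.exp_ne_zero _), ← Complex.exp_add]
      congr 1
      rw [add_comm]
      exact (Complex.re_add_im (u j)).symm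
    have hlim : w / (‖w‖ : ℂ) = Complex.exp (w.arg * Complex.I) := by
      rw [eq_comm, eq_div_iff (by exact_mod_cast habsw), mul_comm]
      exact Complex.norm_mul_exp_arg_mul_I w
    rw [hlim] at hdiv
    exact hdiv.congr heq
  -- exp (t j * I) → 1
  have hexpt : Tendsto (fun j => Complex.exp ((t j : ℂ) * Complex.I)) atTop (𝓝 1) := by
    have hrel : ∀ j, Complex.exp ((t j : ℂ) * Complex.I)
        = Complex.exp ((u j).im * Complex.I) * Complex.exp (-(w.arg : ℂ) * Complex.I) := by
      intro j
      have h1 : Complex.exp ((t j : ℂ) * Complex.I)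
          = Complex.exp ((u j).im * Complex.I) * Complex.exp (-(w.arg : ℂ) * Complex.I)
            * Complex.exp (((-(k j) : ℤ) : ℂ) * (2 * (Real.pi : ℂ) * Complex.I)) := by
        rw [← Complex.exp_add, ← Complex.exp_add]
        congr 1
        rw [ht]
        push_cast
        ring
      rw [h1, Complex.exp_int_mul_two_pi_mul_I, mul_one]
    have hmul := hexpy.mul_const (Complex.exp (-(w.arg : ℂ) * Complex.I))
    rw [← Complex.exp_add, show ((w.arg : ℂ) * Complex.I + -(w.arg : ℂ) * Complex.I) = 0 by ring,
      Complex.exp_zero] at hmul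
    exact (hmul.congr fun j => (hrel j).symm)
  -- cos (t j) → 1
  have hcos : Tendsto (fun j => Real.cos (t j)) atTop (𝓝 1) := by
    have := (Complex.continuous_re.tendsto _).comp hexpt
    rw [Complex.one_re] at this
    refine this.congr fun j => ?_
    exact Complex.exp_ofReal_mul_I_re _
  -- quantitative bound
  have hsq : ∀ j, (t j)^2 ≤ Real.pi^2 * (1 - Real.cos (t j)) / 2 := by
    intro j
    have h1' : Real.sin (|t j|/2)^2 = 1/2 - Real.cos (t j)/2 := by
      rw [Real.sin_sq_eq_half_sub, show 2*(|t j|/2) = |t j| by ring, Real.cos_abs]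
    have h2 : 2/Real.pi * (|t j|/2) ≤ Real.sin (|t j|/2) :=
      Real.mul_le_sin (by positivity) (by linarith [ht_bd j])
    have h3 : (|t j|/Real.pi)^2 ≤ Real.sin (|t j|/2)^2 := by
      have : |t j|/Real.pi = 2/Real.pi * (|t j|/2) := by ring
      rw [this]
      have hnn : (0:ℝ) ≤ 2/Real.pi * (|t j|/2) := by positivity
      exact pow_le_pow_left₀ hnn h2 2
    have h4 : (|t j|/Real.pi)^2 ≤ 1/2 - Real.cos (t j)/2 := h3.trans_eq h1'
    calc (t j)^2 = (|t j|)^2 := (_root_.sq_abs _).symm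
      _ = (|t j|/Real.pi)^2 * Real.pi^2 := by field_simp
      _ ≤ (1/2 - Real.cos (t j)/2) * Real.pi^2 :=
          mul_le_mul_of_nonneg_right h4 (by positivity)
      _ = Real.pi^2 * (1 - Real.cos (t j)) / 2 := by ring
  -- t → 0
  have hsql : Tendsto (fun j => Real.pi^2 * (1 - Real.cos (t j)) / 2) atTop (𝓝 0) := by
    have h5 := (((tendsto_const_nhds (x := (1:ℝ)) (f := atTop)).sub hcos).const_mul
      (Real.pi^2)).div_const 2
    simpa using h5
  have hsq0 : Tendsto (fun j => (t j)^2) atTop (𝓝 0) :=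
    squeeze_zero (fun j => sq_nonneg _) hsq hsql
  have habs0 : Tendsto (fun j => |t j|) atTop (𝓝 0) := by
    have := (Real.continuous_sqrt.tendsto 0).comp hsq0
    rw [show Real.sqrt 0 = 0 by simp] at this
    refine this.congr fun j => ?_
    exact Real.sqrt_sq_eq_abs _
  have ht0 : Tendsto t atTop (𝓝 0) := by
    have hneg := habs0.neg
    rw [neg_zero] at hneg
    exact tendsto_of_tendsto_of_tendsto_of_le_of_le hneg habs0
      (fun j => neg_abs_le _) (fun j => le_abs_self _)
  -- conclude
  refine ⟨k, ?_⟩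
  have hxr : Tendsto (fun j => |(u j).re - Real.log (‖w‖)|) atTop (𝓝 0) := by
    have := (hx.sub_const (Real.log (‖w‖))).abs
    simpa using this
  have hre_eq : ∀ j, (u j - chainPoint w (k j)).re = (u j).re - Real.log (‖w‖) := by
    intro j
    simp [chainPoint]
  have him_eq : ∀ j, (u j - chainPoint w (k j)).im = t j := by
    intro j
    rw [ht]
    simp [chainPoint]
    ring
  have hbound := fun j => Complex.norm_le_abs_re_add_abs_im (u j - chainPoint w (k j))
  refine squeeze_zero (fun j => norm_nonneg _)
    (g := fun j => |(u j).re - Real.log (‖w‖)| + |t j|) (fun j => ?_) ?_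
  · calc ‖u j - chainPoint w (k j)‖
        ≤ |(u j - chainPoint w (k j)).re| + |(u j - chainPoint w (k j)).im| := hbound j
      _ = |(u j).re - Real.log (‖w‖)| + |t j| := by rw [hre_eq, him_eq]
  · have := hxr.add habs0
    simpa using this

/-- Zeros of a nontrivial entire function in a compact set are finite. -/
lemma finite_zeros {f : ℂ → ℂ} (hf : Differentiable ℂ f) {z₀ : ℂ} (h0 : f z₀ ≠ 0)
    {K : Set ℂ} (hK : IsCompact K) : {z | z ∈ K ∧ f z = 0}.Finite := by
  by_contra hinf
  have hI : {z | z ∈ K ∧ f z = 0}.Infinite := fun h => hinf h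
  obtain ⟨x, hxK, hx⟩ := hI.exists_accPt_of_subset_isCompact hK (fun z hz => hz.1)
  rcases (hf.analyticAt x).eventually_eq_zero_or_eventually_ne_zero with h | h
  · have hA : AnalyticOnNhd ℂ f Set.univ := fun z _ => hf.analyticAt z
    have := hA.eqOn_zero_of_preconnected_of_eventuallyEq_zero
      isPreconnected_univ (Set.mem_univ x) h (Set.mem_univ z₀)
    exact h0 this
  · have hmem : {z | f z ≠ 0} ∈ 𝓝[≠] x ⊓ 𝓟 {z | z ∈ K ∧ f z = 0} :=
      Filter.mem_inf_of_left h
    have hmem2 : {z | z ∈ K ∧ f z = 0} ∈ 𝓝[≠] x ⊓ 𝓟 {z | z ∈ K ∧ f z = 0} :=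
      Filter.mem_inf_of_right (Filter.mem_principal_self _)
    have hne : (𝓝[≠] x ⊓ 𝓟 {z | z ∈ K ∧ f z = 0}).NeBot := hx
    obtain ⟨z, hz1, hz2⟩ := Filter.nonempty_of_mem (Filter.inter_mem hmem hmem2)
    exact hz1 hz2.2

/-- determinant of a matrix family is continuous. -/
lemma continuous_det_fam {N : ℕ} : Continuous (fun M : Matrix (Fin N) (Fin N) ℂ => M.det) := by
  have hdet : (fun M : Matrix (Fin N) (Fin N) ℂ => M.det)
      = fun M => ∑ σ : Equiv.Perm (Fin N),
          ((Equiv.Perm.sign σ : ℤ) : ℂ) * ∏ i, M (σ i) i := by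
    funext M
    simp [Matrix.det_apply, Units.smul_def, zsmul_eq_mul]
  rw [hdet]
  refine continuous_finset_sum _ fun σ _ => Continuous.mul continuous_const ?_
  exact continuous_finset_prod _ fun i _ => (continuous_apply i).comp (continuous_apply (σ i))

/-- differentiability of the determinant of a matrix-valued function. -/
lemma differentiable_det_fam {N : ℕ} {F : ℂ → Matrix (Fin N) (Fin N) ℂ}
    (hF : ∀ i j, Differentiable ℂ (fun z => F z i j)) :
    Differentiable ℂ (fun z => (F z).det) := by
  have hdet : (fun z => (F z).det)
      = fun z => ∑ σ : Equiv.Perm (Fin N),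
          ((Equiv.Perm.sign σ : ℤ) : ℂ) * ∏ i, F z (σ i) i := by
    funext z
    simp [Matrix.det_apply, Units.smul_def, zsmul_eq_mul]
  rw [hdet]
  refine Differentiable.fun_sum fun σ _ => Differentiable.const_mul ?_ _
  exact Differentiable.fun_finset_prod fun i _ => hF (σ i) i

/-- entrywise convergence of matrices implies convergence. -/
lemma matrix_tendsto {N : ℕ} {F : ℕ → Matrix (Fin N) (Fin N) ℂ} {L : Matrix (Fin N) (Fin N) ℂ}
    (h : ∀ i j, Tendsto (fun k => F k i j) atTop (𝓝 (L i j))) :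
    Tendsto F atTop (𝓝 L) := by
  refine tendsto_pi_nhds.2 ?_
  intro i
  rw [tendsto_pi_nhds]
  intro j
  exact h i j

/-- differentiability of the parametric integral. -/
lemma differentiable_intEnt {g : ℝ → ℂ} (hg : Integrable g mI) :
    Differentiable ℂ (fun z => ∫ s in Set.Ioc (-1:ℝ) 0, Complex.exp (z * s) * g s) := by
  intro z₀
  have key := hasDerivAt_integral_of_dominated_loc_of_deriv_le (μ := mI)
    (F := fun (z : ℂ) (s : ℝ) => Complex.exp (z * s) * g s)
    (F' := fun (z : ℂ) (s : ℝ) => s * Complex.exp (z * s) * g s) (x₀ := z₀)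
    (bound := fun s => Real.exp (‖z₀‖ + 1) * ‖g s‖) (s := ball z₀ 1) (ball_mem_nhds z₀ zero_lt_one)
    (Eventually.of_forall fun z => asm_exp_mul hg z)
    (integrable_exp_mul hg z₀)
    ((Complex.continuous_ofReal.mul (cont_exp_mul z₀)).aestronglyMeasurable.mul
      hg.aestronglyMeasurable)
    ?_ (hg.norm.const_mul _) ?_
  · exact key.2.differentiableAt
  · filter_upwards [ae_restrict_mem (measurableSet_Ioc :
        MeasurableSet (Set.Ioc (-1:ℝ) 0))] with s hs z hz
    have habs : |s| ≤ 1 := by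
      rw [abs_le]; constructor <;> [linarith [hs.1]; linarith [hs.2]]
    rw [norm_mul, norm_mul, norm_exp_mul, Complex.norm_real, Real.norm_eq_abs]
    have h1 : z.re * s ≤ ‖z₀‖ + 1 := by
      have hz' : ‖z‖ ≤ ‖z₀‖ + 1 := by
        have := mem_ball_iff_norm.1 hz
        calc ‖z‖ = ‖z₀ + (z - z₀)‖ := by ring_nf
          _ ≤ ‖z₀‖ + ‖z - z₀‖ := norm_add_le _ _
          _ ≤ ‖z₀‖ + 1 := by linarith
      calc z.re * s ≤ |z.re * s| := le_abs_self _
        _ = |z.re| * |s| := abs_mul _ _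
        _ ≤ ‖z‖ * 1 := mul_le_mul (Complex.abs_re_le_norm z) habs (abs_nonneg _) (norm_nonneg _)
        _ = ‖z‖ := mul_one _
        _ ≤ ‖z₀‖ + 1 := hz'
    calc |s| * Real.exp (z.re * s) * ‖g s‖ ≤ 1 * Real.exp (‖z₀‖ + 1) * ‖g s‖ := by
          refine mul_le_mul_of_nonneg_right ?_ (norm_nonneg _)
          exact mul_le_mul habs (Real.exp_le_exp.2 h1) (Real.exp_nonneg _) zero_le_one
      _ = Real.exp (‖z₀‖ + 1) * ‖g s‖ := by rw [one_mul]
  · refine Eventually.of_forall fun s => fun z _ => ?_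
    have h1 : HasDerivAt (fun z : ℂ => z * (s:ℂ)) (s:ℂ) z := by
      simpa using (hasDerivAt_id z).mul_const (s:ℂ)
    have h2 : HasDerivAt (fun z : ℂ => Complex.exp (z * s)) ((s:ℂ) * Complex.exp (z * s)) z := by
      have := (Complex.hasDerivAt_exp (z * s)).comp z h1
      rw [mul_comm (s:ℂ)]; exact this
    simpa [mul_comm, mul_assoc, mul_left_comm] using h2.mul_const (g s)



theorem zeros_outside_discs_finite
    (n ℓ : ℕ) (hn : 0 < n) (Am1 : Matrix (Fin n) (Fin n) ℂ)
    (hinv : IsUnit Am1)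
    (μ : Fin ℓ → ℂ) (hμinj : Function.Injective μ)
    (hspec : spectrum ℂ Am1 = Set.range μ)
    (A2 A3 : ℝ → Matrix (Fin n) (Fin n) ℂ)
    (hA2 : ∀ i j, MeasureTheory.MemLp (fun θ => A2 θ i j) 2
      (volume.restrict (Set.Ioc (-1:ℝ) 0)))
    (hA3 : ∀ i j, MeasureTheory.MemLp (fun θ => A3 θ i j) 2
      (volume.restrict (Set.Ioc (-1:ℝ) 0)))
    (r : ℝ) (hr : 0 < r)
    (hsep : ∀ (m i : Fin ℓ) (k j : ℤ), (m, k) ≠ (i, j) →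
      3 * r ≤ ‖chainPoint (μ m) k - chainPoint (μ i) j‖) :
    {z : ℂ | (Delta Am1 A2 A3 z).det = 0 ∧
      ∀ (m : Fin ℓ) (k : ℤ), z ∉ closedBall (chainPoint (μ m) k) r}.Finite := by
  classical
  have hg2 : ∀ i j, Integrable (fun s => A2 s i j) mI := fun i j => integrable_of_L2 (hA2 i j)
  have hg3 : ∀ i j, Integrable (fun s => A3 s i j) mI := fun i j => integrable_of_L2 (hA3 i j)
  set IM2 : ℂ → Matrix (Fin n) (Fin n) ℂ := fun z =>
    Matrix.of (fun i j => ∫ s in Set.Ioc (-1:ℝ) 0, Complex.exp (z * s) * A2 s i j) with hIM2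
  set IM3 : ℂ → Matrix (Fin n) (Fin n) ℂ := fun z =>
    Matrix.of (fun i j => ∫ s in Set.Ioc (-1:ℝ) 0, Complex.exp (z * s) * A3 s i j) with hIM3
  set f : ℂ → ℂ := fun z => (Delta Am1 A2 A3 z).det with hfdef
  have hDelta : ∀ z : ℂ, Delta Am1 A2 A3 z
      = (-z) • 1 + (z * Complex.exp (-z)) • Am1 + z • IM2 z + IM3 z := fun z => rfl
  set N : ℂ → Matrix (Fin n) (Fin n) ℂ := fun z =>
    (-1) + Complex.exp (-z) • Am1 + IM2 z + z⁻¹ • IM3 z with hN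
  set M : ℂ → Matrix (Fin n) (Fin n) ℂ := fun z =>
    Am1 + (-(Complex.exp z)) • 1 + Complex.exp z • IM2 z + (z⁻¹ * Complex.exp z) • IM3 z with hM
  -- the two factorizations
  have hfN : ∀ z : ℂ, z ≠ 0 → f z = z ^ n * (N z).det := by
    intro z hz
    have h1 : Delta Am1 A2 A3 z = z • N z := by
      rw [hDelta z, hN]
      dsimp only
      rw [smul_add, smul_add, smul_add, smul_smul, smul_smul, mul_inv_cancel₀ hz, one_smul,
        smul_neg, ← neg_smul]
    rw [hfdef]
    dsimp only
    rw [h1, Matrix.det_smul, Fintype.card_fin]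
  have hfM : ∀ z : ℂ, z ≠ 0 → f z = (z * Complex.exp (-z)) ^ n * (M z).det := by
    intro z hz
    have hzz : Complex.exp (-z) * Complex.exp z = 1 := by
      rw [← Complex.exp_add]; simp
    have c1 : z * Complex.exp (-z) * -(Complex.exp z) = -z := by
      have h' : z * Complex.exp (-z) * -(Complex.exp z)
          = -(z * (Complex.exp (-z) * Complex.exp z)) := by ring
      rw [h', hzz, mul_one]
    have c2 : z * Complex.exp (-z) * Complex.exp z = z := by
      rw [mul_assoc, hzz, mul_one]
    have c3 : z * Complex.exp (-z) * (z⁻¹ * Complex.exp z) = 1 := by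
      have h' : z * Complex.exp (-z) * (z⁻¹ * Complex.exp z)
          = (z * z⁻¹) * (Complex.exp (-z) * Complex.exp z) := by ring
      rw [h', hzz, mul_inv_cancel₀ hz, mul_one]
    have h1 : Delta Am1 A2 A3 z = (z * Complex.exp (-z)) • M z := by
      rw [hDelta z, hM]
      dsimp only
      rw [smul_add, smul_add, smul_add, smul_smul, smul_smul, smul_smul, c1, c2, c3, one_smul]
      abel
    rw [hfdef]
    dsimp only
    rw [h1, Matrix.det_smul, Fintype.card_fin]
  -- differentiability
  have hdiff : Differentiable ℂ f := by
    refine differentiable_det_fam (F := fun z => Delta Am1 A2 A3 z) (fun i j => ?_)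
    have hentry : (fun z : ℂ => Delta Am1 A2 A3 z i j)
        = fun z : ℂ => -z * (1 : Matrix (Fin n) (Fin n) ℂ) i j
          + (z * Complex.exp (-z)) * Am1 i j
          + z * (∫ s in Set.Ioc (-1:ℝ) 0, Complex.exp (z * s) * A2 s i j)
          + (∫ s in Set.Ioc (-1:ℝ) 0, Complex.exp (z * s) * A3 s i j) := by
      funext z
      simp [Delta, Matrix.add_apply, Matrix.smul_apply, smul_eq_mul, Matrix.of_apply]
    rw [hentry]
    have d1 : Differentiable ℂ (fun z : ℂ => -z * (1 : Matrix (Fin n) (Fin n) ℂ) i j) :=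
      differentiable_id.neg.mul_const _
    have d2 : Differentiable ℂ (fun z : ℂ => (z * Complex.exp (-z)) * Am1 i j) :=
      (differentiable_id.mul (Complex.differentiable_exp.comp differentiable_id.neg)).mul_const _
    have d3 : Differentiable ℂ (fun z : ℂ =>
        z * (∫ s in Set.Ioc (-1:ℝ) 0, Complex.exp (z * s) * A2 s i j)) :=
      differentiable_id.mul (differentiable_intEnt (hg2 i j))
    have d4 : Differentiable ℂ (fun z : ℂ =>
        ∫ s in Set.Ioc (-1:ℝ) 0, Complex.exp (z * s) * A3 s i j) :=
      differentiable_intEnt (hg3 i j)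
    exact ((d1.add d2).add d3).add d4
  -- no zeros far right
  have hRight : ∃ R : ℝ, ∀ z : ℂ, f z = 0 → z.re < R := by
    by_contra hc
    push_neg at hc
    choose Z hZ0 hZre using hc
    set u : ℕ → ℂ := fun j => Z (j : ℝ) with hu
    have hure : Tendsto (fun j => (u j).re) atTop atTop :=
      tendsto_atTop_mono (fun j => hZre (j:ℝ)) tendsto_natCast_atTop_atTop
    have hexp0 : Tendsto (fun j => Complex.exp (-(u j))) atTop (𝓝 0) := by
      rw [tendsto_zero_iff_norm_tendsto_zero]
      have h1 : Tendsto (fun j => -(u j).re) atTop atBot := tendsto_neg_atTop_atBot.comp hure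
      have h2 := Real.tendsto_exp_atBot.comp h1
      refine h2.congr fun j => ?_
      simp [Function.comp, Complex.norm_exp, Complex.neg_re]
    have habs : Tendsto (fun j => ‖u j‖) atTop atTop :=
      tendsto_atTop_mono (fun j => (Complex.re_le_norm (u j))) hure
    have hinv0 : Tendsto (fun j => (u j)⁻¹) atTop (𝓝 0) := by
      rw [tendsto_zero_iff_norm_tendsto_zero]
      have := tendsto_inv_atTop_zero.comp habs
      refine this.congr fun j => ?_
      simp [Function.comp, norm_inv, ]
    have hIM2conv : Tendsto (fun j => IM2 (u j)) atTop (𝓝 0) := by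
      refine matrix_tendsto fun i j => ?_
      have := tendsto_intEnt_right (hg2 i j) hure
      simpa [hIM2] using this
    have hIM3ent : ∀ i j, Tendsto (fun k => ((u k)⁻¹ • IM3 (u k)) i j) atTop (𝓝 0) := by
      intro i j
      have hb : ∀ᶠ k in atTop, ‖((u k)⁻¹ • IM3 (u k)) i j‖
          ≤ ‖(u k)⁻¹‖ * (Real.exp 0 * ∫ s, ‖A3 s i j‖ ∂mI) := by
        filter_upwards [hure.eventually_ge_atTop 0] with k hk
        rw [Matrix.smul_apply, smul_eq_mul, norm_mul]
        refine mul_le_mul_of_nonneg_left ?_ (norm_nonneg _)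
        refine norm_intEnt_le (hg3 i j) fun s hs => ?_
        exact mul_nonpos_of_nonneg_of_nonpos hk hs.2
      have hgl : Tendsto (fun k => ‖(u k)⁻¹‖ * (Real.exp 0 * ∫ s, ‖A3 s i j‖ ∂mI))
          atTop (𝓝 0) := by
        have := (tendsto_zero_iff_norm_tendsto_zero.1 hinv0).mul_const
          (Real.exp 0 * ∫ s, ‖A3 s i j‖ ∂mI)
        simpa using this
      exact squeeze_zero_norm' hb hgl
    have hIM3conv : Tendsto (fun k => (u k)⁻¹ • IM3 (u k)) atTop (𝓝 0) := by
      refine matrix_tendsto fun i j => ?_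
      simpa using hIM3ent i j
    have hNlim : Tendsto (fun j => N (u j)) atTop (𝓝 (-1)) := by
      have h := (((tendsto_const_nhds (x := (-1 : Matrix (Fin n) (Fin n) ℂ)) (f := atTop)).add
        (hexp0.smul_const Am1)).add hIM2conv).add hIM3conv
      rw [zero_smul] at h
      simp only [add_zero] at h
      refine h.congr fun j => ?_
      rw [hN]
    have hune : ∀ᶠ j in atTop, u j ≠ 0 := by
      filter_upwards [hure.eventually_ge_atTop 1] with j hj hj0
      rw [hj0] at hj
      simp at hj
      linarith
    have hdet0 : ∀ᶠ j in atTop, (N (u j)).det = 0 := by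
      filter_upwards [hune] with j hj
      have := hfN (u j) hj
      rw [hZ0 (j:ℝ)] at this
      exact ((mul_eq_zero.mp this.symm).resolve_left (pow_ne_zero _ hj))
    have hdetlim : Tendsto (fun j => (N (u j)).det) atTop
        (𝓝 ((-1 : Matrix (Fin n) (Fin n) ℂ).det)) :=
      (continuous_det_fam.tendsto _).comp hNlim
    have hzero : ((-1 : Matrix (Fin n) (Fin n) ℂ).det) = 0 := by
      exact tendsto_nhds_unique hdetlim
        (Tendsto.congr' (hdet0.mono fun j hj => hj.symm) tendsto_const_nhds)
    have : ((-1 : Matrix (Fin n) (Fin n) ℂ).det) = (-1) ^ n := by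
      rw [show (-1 : Matrix (Fin n) (Fin n) ℂ) = -(1 : Matrix (Fin n) (Fin n) ℂ) from rfl,
        Matrix.det_neg, Matrix.det_one, mul_one, Fintype.card_fin]
    rw [this] at hzero
    exact (pow_ne_zero n (by norm_num : (-1:ℂ) ≠ 0)) hzero
  -- no zeros far left
  have hdetAm1 : Am1.det ≠ 0 := by
    have := (Matrix.isUnit_iff_isUnit_det Am1).mp hinv
    exact IsUnit.ne_zero this
  have hLeft : ∃ R : ℝ, ∀ z : ℂ, f z = 0 → -R < z.re := by
    by_contra hc
    push_neg at hc
    choose Z hZ0 hZre using hc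
    set u : ℕ → ℂ := fun j => Z (j : ℝ) with hu
    have hure : Tendsto (fun j => (u j).re) atTop atBot := by
      refine tendsto_atBot_mono (fun j => hZre (j:ℝ)) ?_
      have := tendsto_neg_atTop_atBot.comp (tendsto_natCast_atTop_atTop (R := ℝ))
      exact this
    have hexp0 : Tendsto (fun j => Complex.exp (u j)) atTop (𝓝 0) := by
      rw [tendsto_zero_iff_norm_tendsto_zero]
      have h2 := Real.tendsto_exp_atBot.comp hure
      refine h2.congr fun j => ?_
      simp [Function.comp, Complex.norm_exp]
    have habs : Tendsto (fun j => ‖u j‖) atTop atTop := by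
      refine tendsto_atTop_mono (fun j => ?_) (tendsto_neg_atBot_atTop.comp hure)
      calc -(u j).re ≤ |(u j).re| := neg_le_abs _
        _ ≤ ‖u j‖ := Complex.abs_re_le_norm _
    have hinv0 : Tendsto (fun j => (u j)⁻¹) atTop (𝓝 0) := by
      rw [tendsto_zero_iff_norm_tendsto_zero]
      have := tendsto_inv_atTop_zero.comp habs
      refine this.congr fun j => ?_
      simp [Function.comp, norm_inv, ]
    have hT2 : Tendsto (fun j => (-(Complex.exp (u j))) • (1 : Matrix (Fin n) (Fin n) ℂ))
        atTop (𝓝 0) := by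
      have := (hexp0.neg).smul_const (1 : Matrix (Fin n) (Fin n) ℂ)
      rw [neg_zero, zero_smul] at this
      exact this
    have hT3 : Tendsto (fun j => Complex.exp (u j) • IM2 (u j)) atTop (𝓝 0) := by
      refine matrix_tendsto fun i j => ?_
      have := tendsto_intEnt_left (hg2 i j) hure
      simpa [hIM2, Matrix.smul_apply, smul_eq_mul] using this
    have hT4 : Tendsto (fun k => ((u k)⁻¹ * Complex.exp (u k)) • IM3 (u k)) atTop (𝓝 0) := by
      refine matrix_tendsto fun i j => ?_
      have hprod := hinv0.mul (tendsto_intEnt_left (hg3 i j) hure)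
      rw [zero_mul] at hprod
      have : (fun k => (((u k)⁻¹ * Complex.exp (u k)) • IM3 (u k)) i j)
          = fun k => (u k)⁻¹ * (Complex.exp (u k) *
              ∫ s in Set.Ioc (-1:ℝ) 0, Complex.exp (u k * s) * A3 s i j) := by
        funext k
        rw [Matrix.smul_apply, smul_eq_mul, hIM3]
        dsimp only [Matrix.of_apply]
        ring
      rw [this]
      simpa using hprod
    have hMlim : Tendsto (fun j => M (u j)) atTop (𝓝 Am1) := by
      have h := ((((tendsto_const_nhds (x := Am1) (f := atTop))).add hT2).add hT3).add hT4
      simp only [add_zero] at h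
      refine h.congr fun j => ?_
      rw [hM]
    have hune : ∀ᶠ j in atTop, u j ≠ 0 := by
      filter_upwards [hure.eventually_le_atBot (-1)] with j hj hj0
      rw [hj0] at hj
      simp at hj
      linarith
    have hdet0 : ∀ᶠ j in atTop, (M (u j)).det = 0 := by
      filter_upwards [hune] with j hj
      have := hfM (u j) hj
      rw [hZ0 (j:ℝ)] at this
      refine ((mul_eq_zero.mp this.symm).resolve_left (pow_ne_zero _ ?_))
      exact mul_ne_zero hj (Complex.exp_ne_zero _)
    have hdetlim : Tendsto (fun j => (M (u j)).det) atTop (𝓝 (Am1.det)) :=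
      (continuous_det_fam.tendsto _).comp hMlim
    have hzero : Am1.det = 0 := by
      exact tendsto_nhds_unique hdetlim
        (Tendsto.congr' (hdet0.mono fun j hj => hj.symm) tendsto_const_nhds)
    exact hdetAm1 hzero
  obtain ⟨R1, hR1⟩ := hRight
  obtain ⟨R2, hR2⟩ := hLeft
  set B : ℝ := max R1 R2 with hB
  -- boundedness of the exceptional zero set
  have hbdd : ∃ R : ℝ, ∀ z : ℂ, (f z = 0 ∧ ∀ (m : Fin ℓ) (k : ℤ),
      z ∉ closedBall (chainPoint (μ m) k) r) → ‖z‖ ≤ R := by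
    by_contra hc
    push_neg at hc
    choose Z hZp hZabs using hc
    set u : ℕ → ℂ := fun j => Z (j : ℝ) with hu
    have hzero : ∀ j : ℕ, f (u j) = 0 := fun j => (hZp (j:ℝ)).1
    have hball : ∀ (j : ℕ) (m : Fin ℓ) (k : ℤ),
        u j ∉ closedBall (chainPoint (μ m) k) r := fun j => (hZp (j:ℝ)).2
    have habs : ∀ j : ℕ, (j:ℝ) < ‖u j‖ := fun j => hZabs (j:ℝ)
    have hreB : ∀ j : ℕ, |(u j).re| ≤ B := by
      intro j
      have h1 := hR1 _ (hzero j)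
      have h2 := hR2 _ (hzero j)
      rw [abs_le]
      constructor
      · have := le_max_right R1 R2
        rw [hB]; linarith
      · have := le_max_left R1 R2
        rw [hB]; linarith
    have him : Tendsto (fun j => |(u j).im|) atTop atTop := by
      refine tendsto_atTop_mono (fun j => ?_)
        (tendsto_atTop_add_const_right atTop (-B) tendsto_natCast_atTop_atTop)
      have h1 := Complex.norm_le_abs_re_add_abs_im (u j)
      have h2 := habs j
      have h3 := hreB j
      linarith
    have hmem1 : ∀ j : ℕ, (u j).re ∈ Set.Icc (-B) B := by
      intro j
      rw [Set.mem_Icc]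
      have := hreB j
      rw [abs_le] at this
      exact this
    obtain ⟨xs, _, φ1, hφ1, hφ1conv⟩ :=
      (isCompact_Icc (a := -B) (b := B)).tendsto_subseq hmem1
    have hmem2 : ∀ j : ℕ, Complex.exp (-(u (φ1 j))) ∈ closedBall (0:ℂ) (Real.exp B) := by
      intro j
      rw [mem_closedBall, Complex.dist_eq, sub_zero, Complex.norm_exp, Complex.neg_re]
      refine Real.exp_le_exp.2 ?_
      have := hreB (φ1 j)
      rw [abs_le] at this
      linarith [this.1]
    obtain ⟨c, _, φ2, hφ2, hφ2conv⟩ :=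
      (isCompact_closedBall (0:ℂ) (Real.exp B)).tendsto_subseq hmem2
    set ψ : ℕ → ℕ := fun j => φ1 (φ2 j) with hψdef
    have hψ : StrictMono ψ := hφ1.comp hφ2
    set v : ℕ → ℂ := fun j => u (ψ j) with hv
    have hvre : Tendsto (fun j => (v j).re) atTop (𝓝 xs) := hφ1conv.comp hφ2.tendsto_atTop
    have hvexp : Tendsto (fun j => Complex.exp (-(v j))) atTop (𝓝 c) := hφ2conv
    have hvim : Tendsto (fun j => |(v j).im|) atTop atTop := him.comp hψ.tendsto_atTop
    have hvabs : Tendsto (fun j => ‖v j‖) atTop atTop := by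
      refine tendsto_atTop_mono (fun j => ?_) tendsto_natCast_atTop_atTop
      calc (j : ℝ) ≤ (ψ j : ℝ) := by exact_mod_cast hψ.le_apply
        _ ≤ ‖v j‖ := le_of_lt (habs (ψ j))
    have hvne : ∀ᶠ j in atTop, v j ≠ 0 := by
      filter_upwards [hvabs.eventually_ge_atTop 1] with j hj hj0
      rw [hj0] at hj
      simp at hj
      linarith
    have hvinv : Tendsto (fun j => (v j)⁻¹) atTop (𝓝 0) := by
      rw [tendsto_zero_iff_norm_tendsto_zero]
      have := tendsto_inv_atTop_zero.comp hvabs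
      refine this.congr fun j => ?_
      simp [Function.comp, norm_inv, ]
    have hIM2conv : Tendsto (fun j => IM2 (v j)) atTop (𝓝 0) := by
      refine matrix_tendsto fun i j => ?_
      have := tendsto_intEnt_mid (hg2 i j) hvre hvim
      simpa [hIM2] using this
    have hIM3conv : Tendsto (fun k => (v k)⁻¹ • IM3 (v k)) atTop (𝓝 0) := by
      refine matrix_tendsto fun i j => ?_
      have hb : ∀ᶠ k in atTop, ‖((v k)⁻¹ • IM3 (v k)) i j‖
          ≤ ‖(v k)⁻¹‖ * (Real.exp B * ∫ s, ‖A3 s i j‖ ∂mI) := by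
        refine Eventually.of_forall fun k => ?_
        rw [Matrix.smul_apply, smul_eq_mul, norm_mul]
        refine mul_le_mul_of_nonneg_left ?_ (norm_nonneg _)
        refine norm_intEnt_le (hg3 i j) fun s hs => ?_
        have h1 : |s| ≤ 1 := by
          rw [abs_le]; constructor <;> [linarith [hs.1]; linarith [hs.2]]
        calc (v k).re * s ≤ |(v k).re * s| := le_abs_self _
          _ = |(v k).re| * |s| := abs_mul _ _
          _ ≤ B * 1 := mul_le_mul (hreB (ψ k)) h1 (abs_nonneg _)
              (le_trans (abs_nonneg _) (hreB (ψ k)))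
          _ = B := mul_one _
      have hgl : Tendsto (fun k => ‖(v k)⁻¹‖ * (Real.exp B * ∫ s, ‖A3 s i j‖ ∂mI))
          atTop (𝓝 0) := by
        have := (tendsto_zero_iff_norm_tendsto_zero.1 hvinv).mul_const
          (Real.exp B * ∫ s, ‖A3 s i j‖ ∂mI)
        simpa using this
      have := squeeze_zero_norm' hb hgl
      simpa using this
    have hNlim : Tendsto (fun j => N (v j)) atTop (𝓝 ((-1) + c • Am1)) := by
      have h := (((tendsto_const_nhds (x := (-1 : Matrix (Fin n) (Fin n) ℂ)) (f := atTop)).add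
        (hvexp.smul_const Am1)).add hIM2conv).add hIM3conv
      simp only [add_zero] at h
      refine h.congr fun j => ?_
      rw [hN]
    have hdet0 : ∀ᶠ j in atTop, (N (v j)).det = 0 := by
      filter_upwards [hvne] with j hj
      have := hfN (v j) hj
      rw [hzero (ψ j)] at this
      exact ((mul_eq_zero.mp this.symm).resolve_left (pow_ne_zero _ hj))
    have hdetlim : Tendsto (fun j => (N (v j)).det) atTop
        (𝓝 (((-1) + c • Am1 : Matrix (Fin n) (Fin n) ℂ).det)) :=
      (continuous_det_fam.tendsto _).comp hNlim
    have hdetL : (((-1) + c • Am1 : Matrix (Fin n) (Fin n) ℂ).det) = 0 := by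
      exact tendsto_nhds_unique hdetlim
        (Tendsto.congr' (hdet0.mono fun j hj => hj.symm) tendsto_const_nhds)
    have hc0 : c ≠ 0 := by
      intro hc0
      rw [hc0, zero_smul, add_zero] at hdetL
      have : ((-1 : Matrix (Fin n) (Fin n) ℂ).det) = (-1) ^ n := by
        rw [show (-1 : Matrix (Fin n) (Fin n) ℂ) = -(1 : Matrix (Fin n) (Fin n) ℂ) from rfl,
          Matrix.det_neg, Matrix.det_one, mul_one, Fintype.card_fin]
      rw [this] at hdetL
      exact (pow_ne_zero n (by norm_num : (-1:ℂ) ≠ 0)) hdetL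
    have hdet2 : (Am1 - (c⁻¹ : ℂ) • (1 : Matrix (Fin n) (Fin n) ℂ)).det = 0 := by
      have hfac : (c : ℂ) • (Am1 - (c⁻¹ : ℂ) • (1 : Matrix (Fin n) (Fin n) ℂ))
          = (-1) + c • Am1 := by
        rw [smul_sub, smul_smul, mul_inv_cancel₀ hc0, one_smul]
        abel
      have h' := congrArg Matrix.det hfac
      rw [Matrix.det_smul, Fintype.card_fin, hdetL] at h'
      exact (mul_eq_zero.mp h').resolve_left (pow_ne_zero _ hc0)
    have hspec_mem : (c⁻¹ : ℂ) ∈ spectrum ℂ Am1 := by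
      rw [spectrum.mem_iff]
      intro hU
      rw [Matrix.isUnit_iff_isUnit_det] at hU
      have halg : algebraMap ℂ (Matrix (Fin n) (Fin n) ℂ) c⁻¹
          = (c⁻¹ : ℂ) • (1 : Matrix (Fin n) (Fin n) ℂ) := Algebra.algebraMap_eq_smul_one _
      have hdet3 : (algebraMap ℂ (Matrix (Fin n) (Fin n) ℂ) c⁻¹ - Am1).det = 0 := by
        rw [halg, show (c⁻¹ : ℂ) • (1 : Matrix (Fin n) (Fin n) ℂ) - Am1
            = -(Am1 - (c⁻¹ : ℂ) • 1) from (neg_sub _ _).symm, Matrix.det_neg, hdet2, mul_zero]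
      rw [hdet3] at hU
      exact (not_isUnit_zero hU)
    rw [hspec] at hspec_mem
    obtain ⟨m, hm⟩ := hspec_mem
    have hvexp' : Tendsto (fun j => Complex.exp (v j)) atTop (𝓝 (c⁻¹)) := by
      have := hvexp.inv₀ hc0
      refine this.congr fun j => ?_
      rw [Complex.exp_neg, inv_inv]
    have hμne : μ m ≠ 0 := by
      rw [hm]
      exact inv_ne_zero hc0
    obtain ⟨k, hkconv⟩ := chain_approx hμne (by rw [hm]; exact hvexp')
    have hev := hkconv.eventually (gt_mem_nhds hr)
    obtain ⟨j, hj⟩ := hev.exists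
    refine hball (ψ j) m (k j) ?_
    rw [mem_closedBall, Complex.dist_eq]
    exact le_of_lt hj
  obtain ⟨R, hR⟩ := hbdd
  -- a point where f is nonzero
  have hz0 : f ((R1 : ℂ)) ≠ 0 := by
    intro h
    have := hR1 _ h
    simp at this
  have hfin := finite_zeros hdiff hz0 (isCompact_closedBall (0:ℂ) R)
  refine hfin.subset ?_
  intro z hz
  refine ⟨?_, hz.1⟩
  rw [mem_closedBall, Complex.dist_eq, sub_zero]
  exact hR z hz
end

section
/- Every complex root of the equation λe^λ + λ + e^λ = 0 has negative real part: for all λ ∈ ℂ, if λ·exp(λ) + λ + exp(λ) = 0 then Re λ < 0. -/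
theorem roots_of_quasipolynomial_in_left_half_plane (lam : ℂ)
    (h : lam * Complex.exp lam + lam + Complex.exp lam = 0) : lam.re < 0 := by
  by_contra hc
  push_neg at hc
  set w := Complex.exp lam with hw
  have h1w : (1 : ℂ) + w ≠ 0 := by
    intro h0
    have hwm : w = -1 := by linear_combination h0
    rw [hwm] at h
    have : (-1 : ℂ) = 0 := by linear_combination h
    norm_num at this
  have hlam : lam = -w / (1 + w) := by
    field_simp
    linear_combination h
  have hre : lam.re = -(w.re + Complex.normSq w) / Complex.normSq (1 + w) := by
    rw [hlam, Complex.div_re]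
    simp [Complex.normSq_apply]
    ring
  have habs : 1 ≤ ‖w‖ := by
    rw [hw, Complex.norm_exp]
    exact Real.one_le_exp hc
  have hns : 1 ≤ Complex.normSq w := by
    rw [← Complex.sq_norm]; nlinarith
  have hsq : w.re ^ 2 + w.im ^ 2 = Complex.normSq w := by
    simp [Complex.normSq_apply]; ring
  have hpos : 0 < w.re + Complex.normSq w := by
    by_contra hle
    push_neg at hle
    have hre1 : w.re ≤ -1 := by linarith
    have hre2 : -1 ≤ w.re := by nlinarith
    have hree : w.re = -1 := le_antisymm hre1 hre2
    have him2 : w.im ^ 2 ≤ 0 := by nlinarith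
    have him : w.im = 0 := by nlinarith [sq_nonneg w.im, sq_abs w.im, abs_nonneg w.im, pow_eq_zero_iff (n := 2) (by norm_num : 2 ≠ 0) |>.mp (le_antisymm him2 (sq_nonneg w.im))]
    apply h1w
    apply Complex.ext <;> simp [hree, him]
  have hd : 0 < Complex.normSq (1 + w) := Complex.normSq_pos.mpr h1w
  have : lam.re < 0 := by
    rw [hre]
    exact div_neg_of_neg_of_pos (by linarith) hd
  linarith
end

section
/- Fix r with 0 < r < π. For a ∈ ℂ let f_a(λ) = a − λ + λe^{−λ}. Then there exists N ∈ ℕ such that for every integer k with |k| ≥ N and every a ∈ ℂ taken from a fixed pair {α, β}: f_a has exactly one zero λ_k(a) (counted with multiplicity, i.e., it is a simple zero) in the closed disc of radius r centered at 2πik; moreover λ_k(α) − λ_k(β) → 0 as |k| → ∞. -/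
open Filter Topology Metric
open scoped NNReal

namespace TwoRootChainsAux

/-- Lipschitz bound for `w ↦ log (1 - w)` on the ball of radius `1/2`. -/
lemma logLip : ∀ w₁ ∈ closedBall (0:ℂ) (1/2), ∀ w₂ ∈ closedBall (0:ℂ) (1/2),
    ‖Complex.log (1 - w₁) - Complex.log (1 - w₂)‖ ≤ 2 * ‖w₁ - w₂‖ := by
  have hder : ∀ w ∈ closedBall (0:ℂ) (1/2),
      HasDerivWithinAt (fun w : ℂ => Complex.log (1 - w)) (-(1-w)⁻¹) (closedBall (0:ℂ) (1/2)) w := by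
    intro w hw
    rw [mem_closedBall, dist_zero_right] at hw
    have hre : w.re ≤ 1/2 := le_trans (le_trans (le_abs_self _) (Complex.abs_re_le_norm w)) hw
    have hslit : (1 - w) ∈ Complex.slitPlane := by
      rw [Complex.mem_slitPlane_iff]
      left
      simp only [Complex.sub_re, Complex.one_re]
      linarith
    have h1 : HasDerivAt (fun w : ℂ => 1 - w) (-1) w := (hasDerivAt_id w).const_sub 1
    have h2 := (Complex.hasDerivAt_log hslit).comp w h1
    have h3 : HasDerivAt (fun w : ℂ => Complex.log (1 - w)) (-(1-w)⁻¹) w := by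
      rw [show -(1-w)⁻¹ = (1-w)⁻¹ * -1 by ring]
      exact h2
    exact h3.hasDerivWithinAt
  intro w₁ h₁ w₂ h₂
  have := (convex_closedBall (0:ℂ) (1/2)).norm_image_sub_le_of_norm_hasDerivWithin_le
    hder (C := 2) ?_ h₂ h₁
  · exact this
  · intro x hx
    rw [mem_closedBall, dist_zero_right] at hx
    have h1x : (1:ℝ)/2 ≤ ‖1 - x‖ := by
      have := norm_sub_norm_le (1:ℂ) x
      simp only [norm_one] at this
      linarith
    rw [norm_neg, norm_inv]
    rw [inv_le_comm₀ (by linarith) (by norm_num)]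
    linarith

/-- Core lemma: existence, uniqueness and simplicity of the root near `c`. -/
lemma core {r B : ℝ} {a c : ℂ} (hr0 : 0 < r) (hrπ : r < Real.pi)
    (hB1 : 1 ≤ B) (hBa : 4 * ‖a‖ ≤ B) (hBr : 2 * ‖a‖ ≤ r * B)
    (hBa1 : ‖a‖ + 5/4 ≤ B)
    (hc : B + r ≤ ‖c‖) (hexp : Complex.exp (-c) = 1) :
    ∃ ρ : ℂ, ρ ∈ closedBall c r ∧ ‖ρ - c‖ ≤ 3 * ‖a‖ / B ∧
      (a - ρ + ρ * Complex.exp (-ρ) = 0) ∧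
      deriv (fun lam : ℂ => a - lam + lam * Complex.exp (-lam)) ρ ≠ 0 ∧
      (∀ w ∈ closedBall c r, a - w + w * Complex.exp (-w) = 0 → w = ρ) := by
  have hB0 : (0:ℝ) < B := lt_of_lt_of_le one_pos hB1
  have ha0 : (0:ℝ) ≤ ‖a‖ := norm_nonneg a
  set s : Set ℂ := closedBall (0:ℂ) r with hs
  set φ : ℂ → ℂ := fun z => -Complex.log (1 - a / (c + z)) with hφ
  -- lower bound on ‖c + z‖
  have key : ∀ z ∈ s, B ≤ ‖c + z‖ := by
    intro z hz
    rw [hs, mem_closedBall, dist_zero_right] at hz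
    have := norm_sub_norm_le c (-z)
    rw [sub_neg_eq_add, norm_neg] at this
    linarith
  have hne : ∀ z ∈ s, c + z ≠ 0 := by
    intro z hz h0
    have := key z hz
    rw [h0, norm_zero] at this
    linarith
  have hub : ∀ z ∈ s, ‖a / (c + z)‖ ≤ ‖a‖ / B := by
    intro z hz
    rw [norm_div]
    exact div_le_div_of_nonneg_left ha0 hB0 (key z hz) |>.trans_eq rfl
  have haB : ‖a‖ / B ≤ 1/4 := by
    rw [div_le_iff₀ hB0]; linarith
  have hub4 : ∀ z ∈ s, ‖a / (c + z)‖ ≤ 1/4 := fun z hz => (hub z hz).trans haB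
  -- φ is bounded by (3/2) * (‖a‖ / B) on s
  have hφb : ∀ z ∈ s, ‖φ z‖ ≤ 3/2 * (‖a‖ / B) := by
    intro z hz
    have h4 := hub z hz
    have h12 : ‖-(a / (c + z))‖ ≤ 1/2 := by
      rw [norm_neg]; exact (hub4 z hz).trans (by norm_num)
    have := Complex.norm_log_one_add_half_le_self h12
    rw [norm_neg] at this
    have heq : (1 : ℂ) + -(a / (c + z)) = 1 - a / (c + z) := by ring
    rw [heq] at this
    rw [hφ]
    simp only [norm_neg]
    calc ‖Complex.log (1 - a / (c + z))‖ ≤ 3/2 * ‖a / (c + z)‖ := this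
      _ ≤ 3/2 * (‖a‖ / B) := by linarith
  have hφr : 3/2 * (‖a‖ / B) ≤ r := by
    have hX0 : 0 ≤ ‖a‖ / B := by positivity
    have h1 : ‖a‖ / B ≤ r / 2 := by
      rw [div_le_div_iff₀ hB0 two_pos]; linarith
    linarith
  have hmaps : Set.MapsTo φ s s := by
    intro z hz
    rw [hs, mem_closedBall, dist_zero_right]
    exact (hφb z hz).trans hφr
  -- Lipschitz bound
  have hlip : ∀ z₁ ∈ s, ∀ z₂ ∈ s, ‖φ z₁ - φ z₂‖ ≤ 1/2 * ‖z₁ - z₂‖ := by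
    intro z₁ h₁ z₂ h₂
    have hm₁ : a / (c + z₁) ∈ closedBall (0:ℂ) (1/2) := by
      rw [mem_closedBall, dist_zero_right]; exact (hub4 z₁ h₁).trans (by norm_num)
    have hm₂ : a / (c + z₂) ∈ closedBall (0:ℂ) (1/2) := by
      rw [mem_closedBall, dist_zero_right]; exact (hub4 z₂ h₂).trans (by norm_num)
    have hL := logLip _ hm₁ _ hm₂
    have hφeq : ‖φ z₁ - φ z₂‖
        = ‖Complex.log (1 - a / (c + z₁)) - Complex.log (1 - a / (c + z₂))‖ := by
      rw [hφ]
      simp only []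
      rw [← norm_neg]
      congr 1
      ring
    have hdiff : a / (c + z₁) - a / (c + z₂) = a * (z₂ - z₁) / ((c + z₁) * (c + z₂)) := by
      field_simp [hne z₁ h₁, hne z₂ h₂]
      ring
    have hdn : ‖a / (c + z₁) - a / (c + z₂)‖ ≤ ‖a‖ * ‖z₁ - z₂‖ / (B * B) := by
      rw [hdiff, norm_div, norm_mul, norm_mul, norm_sub_rev z₂ z₁]
      apply div_le_div₀ (by positivity) le_rfl (by positivity)
      have k1 := key z₁ h₁
      have k2 := key z₂ h₂
      nlinarith
    have hBB : (1:ℝ) ≤ B * B := by nlinarith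
    have h2aB : ‖a‖ / (B * B) ≤ 1/4 := by
      rw [div_le_iff₀ (by positivity : (0:ℝ) < B * B)]
      nlinarith
    calc ‖φ z₁ - φ z₂‖ = ‖Complex.log (1 - a / (c + z₁)) - Complex.log (1 - a / (c + z₂))‖ := hφeq
      _ ≤ 2 * ‖a / (c + z₁) - a / (c + z₂)‖ := logLip _ hm₁ _ hm₂
      _ ≤ 2 * (‖a‖ * ‖z₁ - z₂‖ / (B * B)) := by linarith
      _ = (2 * (‖a‖ / (B * B))) * ‖z₁ - z₂‖ := by ring
      _ ≤ 1/2 * ‖z₁ - z₂‖ := by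
          have := norm_nonneg (z₁ - z₂)
          nlinarith
  -- contraction
  have hlipOn : LipschitzOnWith (2⁻¹ : ℝ≥0) φ s := by
    apply LipschitzOnWith.of_dist_le_mul
    intro x hx y hy
    rw [dist_eq_norm, dist_eq_norm]
    have h := hlip x hx y hy
    have hco : ((2⁻¹ : ℝ≥0) : ℝ) = 1/2 := by norm_num
    rw [hco]
    exact h
  have hcontr : ContractingWith (2⁻¹ : ℝ≥0) (hmaps.restrict φ s s) :=
    ⟨by rw [← NNReal.coe_lt_coe]; norm_num, hlipOn.mapsToRestrict hmaps⟩
  have hsc : IsComplete s := isClosed_closedBall.isComplete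
  have h0s : (0:ℂ) ∈ s := mem_closedBall_self hr0.le
  obtain ⟨z₀, hz₀s, hfix, -, -⟩ :=
    hcontr.exists_fixedPoint' hsc hmaps h0s (edist_ne_top _ _)
  -- the root
  set ρ : ℂ := c + z₀ with hρ
  have hρB : B ≤ ‖ρ‖ := key z₀ hz₀s
  have hρ0 : ρ ≠ 0 := hne z₀ hz₀s
  have huρ : ‖a / ρ‖ ≤ 1/4 := hub4 z₀ hz₀s
  have h1u : (1:ℂ) - a / ρ ≠ 0 := by
    intro h
    have : ‖(1:ℂ)‖ ≤ 1/4 := by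
      have : (1:ℂ) = a / ρ := by linear_combination h
      rw [this]; exact huρ
    rw [norm_one] at this; norm_num at this
  -- exp(-z₀) = 1 - a/ρ
  have hexpz : Complex.exp (-z₀) = 1 - a / ρ := by
    have hfix' : -Complex.log (1 - a / (c + z₀)) = z₀ := hfix
    have hlz : -z₀ = Complex.log (1 - a / (c + z₀)) := by linear_combination hfix'
    have h1u' : (1:ℂ) - a / (c + z₀) ≠ 0 := by rw [← hρ]; exact h1u
    rw [hlz, Complex.exp_log h1u', hρ]
  have hexpρ : Complex.exp (-ρ) = 1 - a / ρ := by
    rw [hρ, neg_add, Complex.exp_add, hexp, one_mul, ← hρ]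
    exact hexpz
  have hroot : a - ρ + ρ * Complex.exp (-ρ) = 0 := by
    rw [hexpρ]
    field_simp
    ring
  have hzb : ‖z₀‖ ≤ 3 * ‖a‖ / B := by
    have := hφb z₀ hz₀s
    rw [hfix] at this
    calc ‖z₀‖ ≤ 3/2 * (‖a‖ / B) := this
      _ = (3/2 * ‖a‖) / B := by ring
      _ ≤ 3 * ‖a‖ / B := by gcongr <;> linarith
  refine ⟨ρ, ?_, ?_, hroot, ?_, ?_⟩
  · rw [mem_closedBall, dist_eq_norm, hρ, add_sub_cancel_left]
    rw [hs, mem_closedBall, dist_zero_right] at hz₀s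
    exact hz₀s
  · rw [hρ, add_sub_cancel_left]; exact hzb
  · -- derivative nonzero
    have h1 : HasDerivAt (fun lam : ℂ => a - lam) (-1) ρ := (hasDerivAt_id ρ).const_sub a
    have h2 : HasDerivAt (fun lam : ℂ => Complex.exp (-lam)) (-Complex.exp (-ρ)) ρ := by
      have := (Complex.hasDerivAt_exp (-ρ)).comp ρ ((hasDerivAt_id ρ).neg)
      simpa [mul_comm, Function.comp_def] using this
    have h3 : HasDerivAt (fun lam : ℂ => lam * Complex.exp (-lam))
        (1 * Complex.exp (-ρ) + ρ * -Complex.exp (-ρ)) ρ := (hasDerivAt_id ρ).mul h2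
    have h4 : HasDerivAt (fun lam : ℂ => a - lam + lam * Complex.exp (-lam))
        (-1 + (1 * Complex.exp (-ρ) + ρ * -Complex.exp (-ρ))) ρ := h1.add h3
    rw [h4.deriv]
    have hval : -1 + (1 * Complex.exp (-ρ) + ρ * -Complex.exp (-ρ)) = a - ρ - a / ρ := by
      rw [hexpρ]
      field_simp
      ring
    rw [hval]
    intro h0
    have h5 : ‖ρ‖ - ‖a - a / ρ‖ ≤ ‖ρ - (a - a / ρ)‖ := norm_sub_norm_le _ _
    have h6 : ρ - (a - a / ρ) = -(a - ρ - a / ρ) := by ring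
    rw [h6, norm_neg, h0, norm_zero] at h5
    have h7 : ‖a - a / ρ‖ ≤ ‖a‖ + ‖a / ρ‖ := norm_sub_le _ _
    linarith
  · -- uniqueness
    intro w hw heq
    have hzmem : w - c ∈ s := by
      rw [hs, mem_closedBall, dist_zero_right]
      rw [mem_closedBall, dist_eq_norm] at hw
      exact hw
    have hwc : c + (w - c) = w := by ring
    have hw0 : w ≠ 0 := by
      have := hne _ hzmem; rwa [hwc] at this
    have hexpw : Complex.exp (-w) = 1 - a / w := by
      field_simp
      linear_combination heq
    have hexpzw : Complex.exp (-(w - c)) = 1 - a / (c + (w - c)) := by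
      have hc1 : Complex.exp c = 1 := by
        have := Complex.exp_neg c
        rw [hexp] at this
        rw [← inv_inv (Complex.exp c), ← this, inv_one]
      rw [show -(w - c) = -w + c by ring, Complex.exp_add, hc1, mul_one, hexpw, hwc]
    have him : |(w - c).im| ≤ r := by
      rw [hs, mem_closedBall, dist_zero_right] at hzmem
      exact le_trans (Complex.abs_im_le_norm _) hzmem
    have hlog : Complex.log (Complex.exp (-(w - c))) = -(w - c) := by
      apply Complex.log_exp
      · simp only [Complex.neg_im]
        rw [abs_le] at him
        linarith
      · simp only [Complex.neg_im]
        rw [abs_le] at him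
        linarith
    have hfixw : φ (w - c) = w - c := by
      rw [hφ]
      simp only []
      rw [← hexpzw, hlog]
      ring
    -- both fixed points
    have hdist : ‖(w - c) - z₀‖ ≤ 1/2 * ‖(w - c) - z₀‖ := by
      calc ‖(w - c) - z₀‖ = ‖φ (w - c) - φ z₀‖ := by rw [hfixw, hfix]
        _ ≤ 1/2 * ‖(w - c) - z₀‖ := hlip _ hzmem _ hz₀s
    have : ‖(w - c) - z₀‖ = 0 := by
      have h := norm_nonneg ((w - c) - z₀)
      linarith
    have := norm_eq_zero.mp this
    rw [sub_eq_zero] at this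
    rw [hρ, ← this]
    ring

end TwoRootChainsAux

lemma norm_c (k : ℤ) : ‖(2 * Real.pi * Complex.I * k : ℂ)‖ = 2 * Real.pi * |(k:ℝ)| := by
  rw [norm_mul, norm_mul, norm_mul]
  simp [Real.pi_nonneg, abs_of_nonneg, Complex.norm_real]

lemma exp_c (k : ℤ) : Complex.exp (-(2 * Real.pi * Complex.I * k)) = 1 := by
  have h := Complex.exp_int_mul_two_pi_mul_I (-k)
  rw [← h]
  congr 1
  push_cast
  ring



open TwoRootChainsAux in
theorem two_root_chains_approach_each_other
    (r : ℝ) (hr0 : 0 < r) (hrπ : r < Real.pi) (α β : ℂ) :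
    ∃ (N : ℕ) (root : ℂ → ℤ → ℂ),
      (∀ k : ℤ, (N : ℤ) ≤ |k| → ∀ a ∈ ({α, β} : Set ℂ),
        root a k ∈ closedBall (2 * Real.pi * Complex.I * k) r ∧
        (a - root a k + root a k * Complex.exp (-root a k) = 0) ∧
        deriv (fun lam : ℂ => a - lam + lam * Complex.exp (-lam)) (root a k) ≠ 0 ∧
        (∀ w ∈ closedBall (2 * Real.pi * Complex.I * k) r,
          a - w + w * Complex.exp (-w) = 0 → w = root a k)) ∧
      Tendsto (fun k : ℤ => root α k - root β k) cofinite (𝓝 0) := by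
  classical
  obtain ⟨M, hMα, hMβ, hM0⟩ : ∃ M : ℝ, ‖α‖ ≤ M ∧ ‖β‖ ≤ M ∧ 0 ≤ M :=
    ⟨max ‖α‖ ‖β‖, le_max_left _ _, le_max_right _ _,
      le_trans (norm_nonneg α) (le_max_left _ _)⟩
  obtain ⟨B₀, hB₀1, hB₀4M, hB₀r, hB₀M1⟩ :
      ∃ B₀ : ℝ, 1 ≤ B₀ ∧ 4 * M ≤ B₀ ∧ 2 * M ≤ r * B₀ ∧ M + 5/4 ≤ B₀ := by
    refine ⟨4 * M + 2 * M / r + 2, ?_, ?_, ?_, ?_⟩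
    · have : 0 ≤ 2 * M / r := by positivity
      linarith
    · have : 0 ≤ 2 * M / r := by positivity
      linarith
    · have h1 : r * (2 * M / r) = 2 * M := by field_simp
      have h3 : 0 ≤ r * (4 * M) := by positivity
      have h4 : 0 ≤ r * 2 := by positivity
      have h2 : r * (4 * M + 2 * M / r + 2) = r * (4 * M) + r * (2 * M / r) + r * 2 := by
        ring
      linarith
    · have : 0 ≤ 2 * M / r := by positivity
      linarith
  have hπ0 : (0:ℝ) < 2 * Real.pi := by positivity
  obtain ⟨N, hNlb⟩ : ∃ N : ℕ, B₀ + r ≤ 2 * Real.pi * N := by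
    refine ⟨⌈(B₀ + r) / (2 * Real.pi)⌉₊, ?_⟩
    have h1 : (B₀ + r) / (2 * Real.pi) ≤ (⌈(B₀ + r) / (2 * Real.pi)⌉₊ : ℝ) :=
      Nat.le_ceil _
    rw [← div_le_iff₀' hπ0]
    linarith
  -- the core existence statement, applied pointwise
  have hcore : ∀ a k, (‖a‖ ≤ M ∧ (N:ℤ) ≤ |k|) →
      ∃ ρ : ℂ, ρ ∈ closedBall (2 * Real.pi * Complex.I * k) r ∧
        ‖ρ - 2 * Real.pi * Complex.I * k‖ ≤ 3 * ‖a‖ / (2 * Real.pi * |(k:ℝ)| - r) ∧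
        (a - ρ + ρ * Complex.exp (-ρ) = 0) ∧
        deriv (fun lam : ℂ => a - lam + lam * Complex.exp (-lam)) ρ ≠ 0 ∧
        (∀ w ∈ closedBall (2 * Real.pi * Complex.I * k) r,
          a - w + w * Complex.exp (-w) = 0 → w = ρ) := by
    intro a k ⟨haM, hkN⟩
    have hk : (N:ℝ) ≤ |(k:ℝ)| := by
      rw [← Int.cast_abs]
      exact_mod_cast hkN
    have hBk : B₀ ≤ 2 * Real.pi * |(k:ℝ)| - r := by
      have : 2 * Real.pi * (N:ℝ) ≤ 2 * Real.pi * |(k:ℝ)| := by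
        apply mul_le_mul_of_nonneg_left hk hπ0.le
      linarith
    apply core hr0 hrπ
    · linarith
    · linarith
    · have h3 : r * B₀ ≤ r * (2 * Real.pi * |(k:ℝ)| - r) := by
        apply mul_le_mul_of_nonneg_left hBk hr0.le
      linarith
    · linarith
    · rw [norm_c k]; linarith
    · exact exp_c k
  set root : ℂ → ℤ → ℂ := fun a k =>
    if h : ‖a‖ ≤ M ∧ (N:ℤ) ≤ |k| then (hcore a k h).choose
    else 2 * Real.pi * Complex.I * k with hroot
  have hmem : ∀ a, a ∈ ({α, β} : Set ℂ) → ‖a‖ ≤ M := by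
    intro a ha
    rcases ha with rfl | ha
    · exact hMα
    · rw [Set.mem_singleton_iff] at ha
      rw [ha]
      exact hMβ
  have hspec : ∀ a k (h : ‖a‖ ≤ M ∧ (N:ℤ) ≤ |k|),
      root a k ∈ closedBall (2 * Real.pi * Complex.I * k) r ∧
      ‖root a k - 2 * Real.pi * Complex.I * k‖ ≤ 3 * ‖a‖ / (2 * Real.pi * |(k:ℝ)| - r) ∧
      (a - root a k + root a k * Complex.exp (-root a k) = 0) ∧
      deriv (fun lam : ℂ => a - lam + lam * Complex.exp (-lam)) (root a k) ≠ 0 ∧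
      (∀ w ∈ closedBall (2 * Real.pi * Complex.I * k) r,
        a - w + w * Complex.exp (-w) = 0 → w = root a k) := by
    intro a k h
    have : root a k = (hcore a k h).choose := by rw [hroot]; exact dif_pos h
    rw [this]
    exact (hcore a k h).choose_spec
  refine ⟨N, root, ?_, ?_⟩
  · intro k hk a ha
    obtain ⟨h1, h2, h3, h4, h5⟩ := hspec a k ⟨hmem a ha, hk⟩
    exact ⟨h1, h3, h4, h5⟩
  · rw [Metric.tendsto_nhds]
    intro ε hε
    rw [Filter.eventually_cofinite]
    set K : ℤ := max (N:ℤ) (⌈(6 * M / ε + r) / (2 * Real.pi)⌉ + 1) with hK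
    apply Set.Finite.subset (Set.finite_Icc (-K) K)
    intro k hk
    rw [Set.mem_Icc, ← abs_le]
    by_contra habs
    push_neg at habs
    apply hk
    -- show the distance is small
    have hkN : (N:ℤ) ≤ |k| := le_trans (le_max_left _ _) habs.le
    have hkC : (⌈(6 * M / ε + r) / (2 * Real.pi)⌉ : ℤ) + 1 ≤ |k| :=
      le_trans (le_max_right _ _) habs.le
    have hkC' : (6 * M / ε + r) / (2 * Real.pi) < |(k:ℝ)| := by
      have h1 : (6 * M / ε + r) / (2 * Real.pi) ≤ (⌈(6 * M / ε + r) / (2 * Real.pi)⌉ : ℝ) :=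
        Int.le_ceil _
      have h2 : ((⌈(6 * M / ε + r) / (2 * Real.pi)⌉ : ℤ) : ℝ) + 1 ≤ |(k:ℝ)| := by
        rw [← Int.cast_abs]
        exact_mod_cast hkC
      linarith
    set Bk : ℝ := 2 * Real.pi * |(k:ℝ)| - r with hBk
    have hBkpos : 6 * M / ε < Bk := by
      have h := hkC'
      rw [div_lt_iff₀ hπ0] at h
      have h2 : |(k:ℝ)| * (2 * Real.pi) = 2 * Real.pi * |(k:ℝ)| := by ring
      rw [h2] at h
      rw [hBk]
      linarith
    have hBk0 : 0 < Bk := by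
      have : 0 ≤ 6 * M / ε := by positivity
      linarith
    obtain ⟨-, hbα, -, -, -⟩ := hspec α k ⟨hMα, hkN⟩
    obtain ⟨-, hbβ, -, -, -⟩ := hspec β k ⟨hMβ, hkN⟩
    have hα3 : 3 * ‖α‖ / Bk ≤ 3 * M / Bk := by
      gcongr
    have hβ3 : 3 * ‖β‖ / Bk ≤ 3 * M / Bk := by
      gcongr
    have htri : ‖root α k - root β k‖ ≤ 3 * M / Bk + 3 * M / Bk := by
      calc ‖root α k - root β k‖
          = ‖(root α k - 2 * Real.pi * Complex.I * k) -
              (root β k - 2 * Real.pi * Complex.I * k)‖ := by congr 1; ring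
        _ ≤ ‖root α k - 2 * Real.pi * Complex.I * k‖ +
              ‖root β k - 2 * Real.pi * Complex.I * k‖ := norm_sub_le _ _
        _ ≤ 3 * M / Bk + 3 * M / Bk := by
            apply add_le_add (le_trans hbα hα3) (le_trans hbβ hβ3)
    have hfinal : 6 * M / Bk < ε := by
      rw [div_lt_iff₀ hBk0]
      have h6 : 6 * M = ε * (6 * M / ε) := by field_simp
      calc 6 * M = ε * (6 * M / ε) := h6
        _ < ε * Bk := by exact mul_lt_mul_of_pos_left hBkpos hε
    rw [dist_zero_right]
    calc ‖root α k - root β k‖ ≤ 3 * M / Bk + 3 * M / Bk := htri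
      _ = 6 * M / Bk := by ring
      _ < ε := hfinal
end

section
/- Let n be a positive integer, A₋₁ an n×n complex matrix, A₂, A₃ : [-1,0] → ℂ^{n×n} matrix-valued functions with square-integrable entries, and Δ(λ) the characteristic matrix function. Then there exists ω ∈ ℝ such that every λ ∈ ℂ with det Δ(λ) = 0 satisfies Re λ ≤ ω. In particular, det Δ is not identically zero. -/
open MeasureTheory Complex Set Filter

namespace SpecAux

noncomputable abbrev μ01 : Measure ℝ := volume.restrict (Set.Ioc (-1:ℝ) 0)

instance : IsFiniteMeasure μ01 := by
  constructor
  rw [Measure.restrict_apply_univ, Real.volume_Ioc]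
  exact ENNReal.ofReal_lt_top

lemma ae_neg : ∀ᵐ s ∂μ01, s < 0 := by
  have h1 : ∀ᵐ s ∂μ01, s ∈ Set.Ioc (-1:ℝ) 0 := ae_restrict_mem measurableSet_Ioc
  have h2 : ∀ᵐ s ∂μ01, s ≠ 0 := by
    rw [ae_iff]
    have : {s : ℝ | ¬ s ≠ 0} = {0} := by ext s; simp
    rw [this, Measure.restrict_apply (measurableSet_singleton 0)]
    exact measure_mono_null (Set.inter_subset_left) Real.volume_singleton
  filter_upwards [h1, h2] with s hs hne
  exact lt_of_le_of_ne hs.2 hne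

lemma F_aesm {g : ℝ → ℂ} (hg : AEStronglyMeasurable g μ01) (r : ℝ) :
    AEStronglyMeasurable (fun s => Real.exp (s * r) * ‖g s‖) μ01 :=
  ((Real.continuous_exp.comp (continuous_id.mul continuous_const)).aestronglyMeasurable).mul hg.norm

lemma F_nonneg (g : ℝ → ℂ) (r : ℝ) (s : ℝ) : 0 ≤ Real.exp (s * r) * ‖g s‖ :=
  mul_nonneg (Real.exp_nonneg _) (norm_nonneg _)

lemma F_integrable {g : ℝ → ℂ} (hg : AEStronglyMeasurable g μ01)
    (hgi : Integrable g μ01) {r : ℝ} (hr : 0 ≤ r) :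
    Integrable (fun s => Real.exp (s * r) * ‖g s‖) μ01 := by
  refine hgi.norm.mono' (F_aesm hg r) ?_
  filter_upwards [ae_neg] with s hs
  rw [Real.norm_of_nonneg (F_nonneg g r s)]
  have : Real.exp (s * r) ≤ 1 := Real.exp_le_one_iff.2 (mul_nonpos_of_nonpos_of_nonneg hs.le hr)
  calc Real.exp (s*r) * ‖g s‖ ≤ 1 * ‖g s‖ :=
        mul_le_mul_of_nonneg_right this (norm_nonneg _)
    _ = ‖g s‖ := one_mul _

lemma F_mono {g : ℝ → ℂ} (hg : AEStronglyMeasurable g μ01) (hgi : Integrable g μ01)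
    {w r : ℝ} (hw : 0 ≤ w) (hwr : w ≤ r) :
    ∫ s, Real.exp (s * r) * ‖g s‖ ∂μ01 ≤ ∫ s, Real.exp (s * w) * ‖g s‖ ∂μ01 := by
  refine integral_mono_of_nonneg (ae_of_all _ (F_nonneg g r)) (F_integrable hg hgi hw) ?_
  filter_upwards [ae_neg] with s hs
  exact mul_le_mul_of_nonneg_right
    (Real.exp_le_exp.2 (mul_le_mul_of_nonpos_left hwr hs.le)) (norm_nonneg _)

lemma F_tendsto {g : ℝ → ℂ} (hg : AEStronglyMeasurable g μ01) (hgi : Integrable g μ01) :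
    Tendsto (fun r : ℝ => ∫ s, Real.exp (s * r) * ‖g s‖ ∂μ01) atTop (nhds 0) := by
  have h := tendsto_integral_filter_of_dominated_convergence (μ := μ01)
    (F := fun r s => Real.exp (s * r) * ‖g s‖) (f := fun _ => (0:ℝ))
    (bound := fun s => ‖g s‖)
    (Eventually.of_forall fun r => F_aesm hg r)
    (by
      filter_upwards [eventually_ge_atTop (0:ℝ)] with r hr
      filter_upwards [ae_neg] with s hs
      rw [Real.norm_of_nonneg (F_nonneg g r s)]
      have : Real.exp (s * r) ≤ 1 := Real.exp_le_one_iff.2 (mul_nonpos_of_nonpos_of_nonneg hs.le hr)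
      calc Real.exp (s*r) * ‖g s‖ ≤ 1 * ‖g s‖ :=
            mul_le_mul_of_nonneg_right this (norm_nonneg _)
        _ = ‖g s‖ := one_mul _)
    hgi.norm
    (by
      filter_upwards [ae_neg] with s hs
      have h1 : Tendsto (fun r : ℝ => s * r) atTop atBot :=
        tendsto_id.const_mul_atTop_of_neg hs
      have h2 : Tendsto (fun r : ℝ => Real.exp (s * r)) atTop (nhds 0) :=
        Real.tendsto_exp_atBot.comp h1
      simpa using h2.mul_const ‖g s‖)
  simpa using h

lemma entry_bound (g : ℝ → ℂ) (lam : ℂ) :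
    ‖∫ s in Set.Ioc (-1:ℝ) 0, Complex.exp (lam * s) * g s‖
      ≤ ∫ s, Real.exp (s * lam.re) * ‖g s‖ ∂μ01 := by
  refine (norm_integral_le_integral_norm _).trans_eq ?_
  refine integral_congr_ae (ae_of_all _ fun s => ?_)
  simp [Complex.norm_exp, Complex.mul_re, mul_comm]

section MatrixNorm
attribute [local instance] Matrix.linftyOpNormedRing Matrix.linftyOpNormedAlgebra

lemma matnorm_le {n : ℕ} (M : Matrix (Fin n) (Fin n) ℂ) :
    ‖M‖ ≤ ∑ i, ∑ j, ‖M i j‖ := by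
  rw [Matrix.linfty_opNorm_def]
  have h : ((Finset.univ : Finset (Fin n)).sup fun i => ∑ j, ‖M i j‖₊)
      ≤ ∑ i, ∑ j, ‖M i j‖₊ :=
    Finset.sup_le fun i _ =>
      Finset.single_le_sum (f := fun i => ∑ j, ‖M i j‖₊) (fun _ _ => zero_le)
        (Finset.mem_univ i)
  calc (((Finset.univ : Finset (Fin n)).sup fun i => ∑ j, ‖M i j‖₊ : NNReal) : ℝ)
      ≤ ((∑ i, ∑ j, ‖M i j‖₊ : NNReal) : ℝ) := by exact_mod_cast h
    _ = ∑ i, ∑ j, ‖M i j‖ := by push_cast; rfl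

lemma det_ne_zero_aux {n : ℕ} (hn : 0 < n) (lam : ℂ) (hlam : lam ≠ 0)
    (R : Matrix (Fin n) (Fin n) ℂ) (hR : ‖R‖ < ‖lam‖) :
    ((-lam) • (1 : Matrix (Fin n) (Fin n) ℂ) + R).det ≠ 0 := by
  haveI : Nonempty (Fin n) := ⟨⟨0, hn⟩⟩
  haveI : CompleteSpace (Matrix (Fin n) (Fin n) ℂ) := FiniteDimensional.complete ℂ _
  set B := lam⁻¹ • R with hBdef
  have hpos : (0:ℝ) < ‖lam‖ := norm_pos_iff.2 hlam
  have hB : ‖B‖ < 1 := by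
    rw [hBdef, norm_smul, norm_inv, ← div_eq_inv_mul, div_lt_one hpos]
    exact hR
  have hunit : IsUnit ((1 : Matrix (Fin n) (Fin n) ℂ) - B) := isUnit_one_sub_of_norm_lt_one hB
  have hfac : (-lam) • (1 : Matrix (Fin n) (Fin n) ℂ) + R
      = (-lam) • ((1 : Matrix (Fin n) (Fin n) ℂ) - B) := by
    rw [smul_sub, hBdef, smul_smul, neg_mul, mul_inv_cancel₀ hlam]
    simp
  rw [hfac, Matrix.det_smul]
  exact mul_ne_zero (pow_ne_zero _ (neg_ne_zero.2 hlam))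
    (((Matrix.isUnit_iff_isUnit_det _).1 hunit).ne_zero)

end MatrixNorm
end SpecAux

section Main
attribute [local instance] Matrix.linftyOpNormedRing Matrix.linftyOpNormedAlgebra

theorem spectrum_in_left_half_plane
    (n : ℕ) (hn : 0 < n) (Am1 : Matrix (Fin n) (Fin n) ℂ)
    (A2 A3 : ℝ → Matrix (Fin n) (Fin n) ℂ)
    (hA2 : ∀ i j, MeasureTheory.MemLp (fun θ => A2 θ i j) 2
      (volume.restrict (Set.Ioc (-1:ℝ) 0)))
    (hA3 : ∀ i j, MeasureTheory.MemLp (fun θ => A3 θ i j) 2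
      (volume.restrict (Set.Ioc (-1:ℝ) 0))) :
    (∃ ω : ℝ, ∀ lam : ℂ, (Delta Am1 A2 A3 lam).det = 0 → lam.re ≤ ω) ∧
      ∃ lam : ℂ, (Delta Am1 A2 A3 lam).det ≠ 0 := by
  haveI : Nonempty (Fin n) := ⟨⟨0, hn⟩⟩
  have hA2i : ∀ i j, Integrable (fun θ => A2 θ i j) SpecAux.μ01 :=
    fun i j => (hA2 i j).integrable (by norm_num)
  have hA3i : ∀ i j, Integrable (fun θ => A3 θ i j) SpecAux.μ01 :=
    fun i j => (hA3 i j).integrable (by norm_num)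
  set Φ : ℝ → ℝ := fun r => Real.exp (-r) * ‖Am1‖
    + (∑ i, ∑ j, ∫ s, Real.exp (s * r) * ‖A2 s i j‖ ∂SpecAux.μ01)
    + (∑ i, ∑ j, ∫ s, Real.exp (s * r) * ‖A3 s i j‖ ∂SpecAux.μ01) with hΦdef
  have hΦt : Tendsto Φ atTop (nhds 0) := by
    have t1 : Tendsto (fun r : ℝ => Real.exp (-r) * ‖Am1‖) atTop (nhds 0) := by
      have := (Real.tendsto_exp_atBot.comp tendsto_neg_atTop_atBot).mul_const ‖Am1‖
      simpa using this
    have t2 : Tendsto (fun r : ℝ => ∑ i, ∑ j, ∫ s, Real.exp (s * r) * ‖A2 s i j‖ ∂SpecAux.μ01)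
        atTop (nhds 0) := by
      have := tendsto_finset_sum (Finset.univ : Finset (Fin n)) (fun i _ =>
        tendsto_finset_sum (Finset.univ : Finset (Fin n)) (fun j _ =>
          SpecAux.F_tendsto (hA2 i j).1 (hA2i i j)))
      simpa using this
    have t3 : Tendsto (fun r : ℝ => ∑ i, ∑ j, ∫ s, Real.exp (s * r) * ‖A3 s i j‖ ∂SpecAux.μ01)
        atTop (nhds 0) := by
      have := tendsto_finset_sum (Finset.univ : Finset (Fin n)) (fun i _ =>
        tendsto_finset_sum (Finset.univ : Finset (Fin n)) (fun j _ =>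
          SpecAux.F_tendsto (hA3 i j).1 (hA3i i j)))
      simpa using this
    have := (t1.add t2).add t3
    simpa using this
  obtain ⟨ω, hΦω, hω1⟩ :=
    ((hΦt.eventually_lt_const one_pos).and (eventually_ge_atTop (1:ℝ))).exists
  have key : ∀ lam : ℂ, ω < lam.re → (Delta Am1 A2 A3 lam).det ≠ 0 := by
    intro lam hlt
    have hω0 : (0:ℝ) ≤ ω := le_trans zero_le_one hω1
    have hre1 : 1 ≤ lam.re := le_trans hω1 hlt.le
    have hlam : lam ≠ 0 := by
      intro h
      rw [h] at hre1
      simp at hre1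
      linarith
    have hnorm1 : 1 ≤ ‖lam‖ := hre1.trans (by simpa using Complex.re_le_norm lam)
    have hpos : (0:ℝ) < ‖lam‖ := lt_of_lt_of_le one_pos hnorm1
    set M2 : Matrix (Fin n) (Fin n) ℂ :=
      Matrix.of (fun i j => ∫ s in Set.Ioc (-1:ℝ) 0, Complex.exp (lam * s) * A2 s i j) with hM2def
    set M3 : Matrix (Fin n) (Fin n) ℂ :=
      Matrix.of (fun i j => ∫ s in Set.Ioc (-1:ℝ) 0, Complex.exp (lam * s) * A3 s i j) with hM3def
    set R : Matrix (Fin n) (Fin n) ℂ :=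
      (lam * Complex.exp (-lam)) • Am1 + (lam • M2 + M3) with hRdef
    have hS2nn : (0:ℝ) ≤ ∑ i, ∑ j, ∫ s, Real.exp (s * ω) * ‖A2 s i j‖ ∂SpecAux.μ01 :=
      Finset.sum_nonneg fun i _ => Finset.sum_nonneg fun j _ =>
        integral_nonneg (SpecAux.F_nonneg _ ω)
    have hS3nn : (0:ℝ) ≤ ∑ i, ∑ j, ∫ s, Real.exp (s * ω) * ‖A3 s i j‖ ∂SpecAux.μ01 :=
      Finset.sum_nonneg fun i _ => Finset.sum_nonneg fun j _ =>
        integral_nonneg (SpecAux.F_nonneg _ ω)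
    have hM2 : ‖M2‖ ≤ ∑ i, ∑ j, ∫ s, Real.exp (s * ω) * ‖A2 s i j‖ ∂SpecAux.μ01 :=
      (SpecAux.matnorm_le M2).trans (Finset.sum_le_sum fun i _ => Finset.sum_le_sum fun j _ =>
        (SpecAux.entry_bound (fun s => A2 s i j) lam).trans
          (SpecAux.F_mono (hA2 i j).1 (hA2i i j) hω0 hlt.le))
    have hM3 : ‖M3‖ ≤ ∑ i, ∑ j, ∫ s, Real.exp (s * ω) * ‖A3 s i j‖ ∂SpecAux.μ01 :=
      (SpecAux.matnorm_le M3).trans (Finset.sum_le_sum fun i _ => Finset.sum_le_sum fun j _ =>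
        (SpecAux.entry_bound (fun s => A3 s i j) lam).trans
          (SpecAux.F_mono (hA3 i j).1 (hA3i i j) hω0 hlt.le))
    have hAm : ‖(lam * Complex.exp (-lam)) • Am1‖ ≤ ‖lam‖ * (Real.exp (-ω) * ‖Am1‖) := by
      rw [norm_smul, norm_mul]
      have he : ‖Complex.exp (-lam)‖ ≤ Real.exp (-ω) := by
        rw [Complex.norm_exp]
        exact Real.exp_le_exp.2 (by simpa using neg_le_neg hlt.le)
      calc ‖lam‖ * ‖Complex.exp (-lam)‖ * ‖Am1‖
          ≤ ‖lam‖ * Real.exp (-ω) * ‖Am1‖ := by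
            have := mul_le_mul_of_nonneg_left he (norm_nonneg lam)
            exact mul_le_mul_of_nonneg_right this (norm_nonneg Am1)
        _ = ‖lam‖ * (Real.exp (-ω) * ‖Am1‖) := by ring
    have hRle : ‖R‖ ≤ ‖lam‖ * Φ ω := by
      have h1 : ‖R‖ ≤ ‖(lam * Complex.exp (-lam)) • Am1‖ + (‖lam • M2‖ + ‖M3‖) :=
        (norm_add_le _ _).trans (by gcongr; exact norm_add_le _ _)
      have h2 : ‖lam • M2‖ ≤ ‖lam‖ * (∑ i, ∑ j, ∫ s, Real.exp (s * ω) * ‖A2 s i j‖ ∂SpecAux.μ01) := by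
        rw [norm_smul]
        exact mul_le_mul_of_nonneg_left hM2 (norm_nonneg lam)
      have h3 : ‖M3‖ ≤ ‖lam‖ * (∑ i, ∑ j, ∫ s, Real.exp (s * ω) * ‖A3 s i j‖ ∂SpecAux.μ01) := by
        calc ‖M3‖ ≤ ∑ i, ∑ j, ∫ s, Real.exp (s * ω) * ‖A3 s i j‖ ∂SpecAux.μ01 := hM3
          _ = 1 * _ := (one_mul _).symm
          _ ≤ ‖lam‖ * _ := mul_le_mul_of_nonneg_right hnorm1 hS3nn
      calc ‖R‖ ≤ ‖(lam * Complex.exp (-lam)) • Am1‖ + (‖lam • M2‖ + ‖M3‖) := h1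
        _ ≤ ‖lam‖ * (Real.exp (-ω) * ‖Am1‖)
            + (‖lam‖ * (∑ i, ∑ j, ∫ s, Real.exp (s * ω) * ‖A2 s i j‖ ∂SpecAux.μ01)
              + ‖lam‖ * (∑ i, ∑ j, ∫ s, Real.exp (s * ω) * ‖A3 s i j‖ ∂SpecAux.μ01)) := by
            gcongr
        _ = ‖lam‖ * Φ ω := by rw [hΦdef]; ring
    have hRlt : ‖R‖ < ‖lam‖ := by
      calc ‖R‖ ≤ ‖lam‖ * Φ ω := hRle
        _ < ‖lam‖ * 1 := mul_lt_mul_of_pos_left hΦω hpos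
        _ = ‖lam‖ := mul_one _
    have hDelta : Delta Am1 A2 A3 lam = (-lam) • (1 : Matrix (Fin n) (Fin n) ℂ) + R := by
      rw [hRdef, hM2def, hM3def]
      simp only [Delta, add_assoc]
    rw [hDelta]
    exact SpecAux.det_ne_zero_aux hn lam hlam R hRlt
  constructor
  · exact ⟨ω, fun lam hdet => not_lt.1 fun h => key lam h hdet⟩
  · refine ⟨((ω + 1 : ℝ) : ℂ), key _ ?_⟩
    simp

end Main
end

section
/- Let n be a positive integer, A₋₁ an invertible n×n complex matrix, A₂, A₃ : [-1,0] → ℂ^{n×n} matrix-valued functions with square-integrable entries, and Δ(λ) the characteristic matrix function. Let c ∈ ℝ be such that c ≠ ln|μ| for every eigenvalue μ of A₋₁. Then there exists ε > 0 such that the set of zeros of det Δ in the vertical strip {λ ∈ ℂ : |Re λ − c| ≤ ε} is finite. -/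
open MeasureTheory Complex Set

open Filter Topology

namespace NeutralAux

noncomputable def G (a : ℝ → ℂ) (lam : ℂ) : ℂ :=
  ∫ s in Set.Ioc (-1:ℝ) 0, Complex.exp (lam * s) * a s

local notation "μ₀" => volume.restrict (Set.Ioc (-1:ℝ) 0)

lemma finite_mu0 : IsFiniteMeasure (volume.restrict (Set.Ioc (-1:ℝ) 0)) := by
  constructor
  rw [Measure.restrict_apply_univ, Real.volume_Ioc]
  exact ENNReal.ofReal_lt_top

lemma exp_norm_le {lam : ℂ} {s : ℝ} (hs : s ∈ Set.Ioc (-1:ℝ) 0) :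
    ‖Complex.exp (lam * s)‖ ≤ Real.exp |lam.re| := by
  rw [Complex.norm_exp]
  apply Real.exp_le_exp.2
  have h1 : (lam * (s:ℂ)).re = lam.re * s := by simp [Complex.mul_re]
  rw [h1]
  calc lam.re * s ≤ |lam.re * s| := le_abs_self _
    _ = |lam.re| * |s| := abs_mul _ _
    _ ≤ |lam.re| * 1 := by
        refine mul_le_mul_of_nonneg_left ?_ (abs_nonneg _)
        rw [abs_le]; constructor <;> nlinarith [hs.1, hs.2]
    _ = |lam.re| := mul_one _

lemma integrable_exp_mul {a : ℝ → ℂ} (ha : Integrable a μ₀) (lam : ℂ) :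
    Integrable (fun s : ℝ => Complex.exp (lam * s) * a s) μ₀ := by
  refine ha.bdd_mul (c := Real.exp |lam.re|) ((Complex.continuous_exp.comp (continuous_const.mul
    Complex.continuous_ofReal)).aestronglyMeasurable) ?_
  filter_upwards [ae_restrict_mem measurableSet_Ioc] with s hs
  exact exp_norm_le hs

lemma G_norm_le {a : ℝ → ℂ} (ha : Integrable a μ₀) (lam : ℂ) :
    ‖G a lam‖ ≤ Real.exp |lam.re| * ∫ s in Set.Ioc (-1:ℝ) 0, ‖a s‖ := by
  calc ‖G a lam‖ ≤ ∫ s in Set.Ioc (-1:ℝ) 0, Real.exp |lam.re| * ‖a s‖ := by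
        refine norm_integral_le_of_norm_le (ha.norm.const_mul _) ?_
        filter_upwards [ae_restrict_mem measurableSet_Ioc] with s hs
        rw [norm_mul]
        exact mul_le_mul_of_nonneg_right (exp_norm_le hs) (norm_nonneg _)
    _ = Real.exp |lam.re| * ∫ s in Set.Ioc (-1:ℝ) 0, ‖a s‖ := integral_const_mul _ _

lemma G_differentiable {a : ℝ → ℂ} (ha : Integrable a μ₀) :
    Differentiable ℂ (G a) := by
  intro lam0
  have key := hasDerivAt_integral_of_dominated_loc_of_deriv_le
    (F := fun (lam : ℂ) (s : ℝ) => Complex.exp (lam * s) * a s)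
    (F' := fun (lam : ℂ) (s : ℝ) => (s : ℂ) * Complex.exp (lam * s) * a s)
    (μ := μ₀) (x₀ := lam0)
    (bound := fun s => Real.exp (‖lam0‖ + 1) * ‖a s‖)
    (Metric.ball_mem_nhds lam0 one_pos)
    (Eventually.of_forall fun lam =>
      ((Complex.continuous_exp.comp (continuous_const.mul
        Complex.continuous_ofReal)).aestronglyMeasurable).mul ha.1)
    (integrable_exp_mul ha lam0)
    ((((Complex.continuous_ofReal.mul (Complex.continuous_exp.comp (continuous_const.mul
        Complex.continuous_ofReal)))).aestronglyMeasurable).mul ha.1)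
    ?_ ((ha.norm.const_mul _)) ?_
  · exact key.2.differentiableAt
  · filter_upwards [ae_restrict_mem measurableSet_Ioc] with s hs lam hlam
    have hs1 : |s| ≤ 1 := by rw [abs_le]; constructor <;> nlinarith [hs.1, hs.2]
    have hre : |lam.re| ≤ ‖lam0‖ + 1 := by
      have h1 : |lam.re| ≤ ‖lam‖ := Complex.abs_re_le_norm lam
      have h2 : ‖lam‖ ≤ ‖lam0‖ + 1 := by
        have := mem_ball_iff_norm.1 hlam
        calc ‖lam‖ = ‖lam0 + (lam - lam0)‖ := by ring_nf
          _ ≤ ‖lam0‖ + ‖lam - lam0‖ := norm_add_le _ _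
          _ ≤ ‖lam0‖ + 1 := by linarith
      linarith
    rw [norm_mul, norm_mul]
    calc ‖(s:ℂ)‖ * ‖Complex.exp (lam * s)‖ * ‖a s‖
        ≤ 1 * Real.exp (‖lam0‖ + 1) * ‖a s‖ := by
          refine mul_le_mul_of_nonneg_right ?_ (norm_nonneg _)
          refine mul_le_mul ?_ ?_ (norm_nonneg _) zero_le_one
          · simpa [Complex.norm_real] using hs1
          · exact le_trans (exp_norm_le hs) (Real.exp_le_exp.2 hre)
      _ = Real.exp (‖lam0‖ + 1) * ‖a s‖ := by ring
  · filter_upwards with s lam _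
    have h1 : HasDerivAt (fun x : ℂ => x * (s:ℂ)) (s:ℂ) lam := hasDerivAt_mul_const _
    have h2 : HasDerivAt (fun x : ℂ => Complex.exp (x * s))
        (Complex.exp (lam * s) * (s:ℂ)) lam :=
      (Complex.hasDerivAt_exp (lam * s)).comp lam h1
    have h3 := h2.mul_const (a s)
    exact h3.congr_deriv (by ring)


lemma exp_diff_bound {lam : ℂ} {x : ℝ} (hk : |lam.re - x| ≤ 1) {s : ℝ}
    (hs : s ∈ Set.Ioc (-1:ℝ) 0) :
    ‖Complex.exp (lam * s) - Complex.exp (((x:ℂ) + lam.im * I) * s)‖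
      ≤ Real.exp |x| * (2 * |lam.re - x|) := by
  set zeta : ℂ := (x:ℂ) + lam.im * I with hzeta
  have hzre : zeta.re = x := by simp [hzeta]
  have key : ∀ d : ℝ, lam = zeta + d →
      Complex.exp (lam * s) - Complex.exp (zeta * s)
        = Complex.exp (zeta * s) * (Complex.exp (((lam.re : ℂ) - x) * s) - 1) := by
    intro d hd
    have hd' : ((lam.re : ℂ) - x) = (d : ℂ) := by
      rw [hd]; simp [hzeta]
    rw [hd', hd, mul_sub, mul_one, ← Complex.exp_add]
    congr 2
    ring
  have hfac := key (lam.re - x) (by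
    rw [hzeta]
    apply Complex.ext <;> push_cast <;> simp)
  rw [hfac, norm_mul]
  have h1 : ‖Complex.exp (zeta * s)‖ ≤ Real.exp |x| := by
    simpa [hzre] using exp_norm_le (lam := zeta) hs
  have habs : ‖((lam.re : ℂ) - x) * s‖ ≤ |lam.re - x| := by
    rw [show ((lam.re : ℂ) - x) * s = (((lam.re - x) * s : ℝ) : ℂ) by push_cast; ring,
      Complex.norm_real, Real.norm_eq_abs, abs_mul]
    calc |lam.re - x| * |s| ≤ |lam.re - x| * 1 := by
          refine mul_le_mul_of_nonneg_left ?_ (abs_nonneg _)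
          rw [abs_le]; constructor <;> nlinarith [hs.1, hs.2]
      _ = |lam.re - x| := mul_one _
  have h2 : ‖Complex.exp (((lam.re : ℂ) - x) * s) - 1‖ ≤ 2 * |lam.re - x| := by
    calc ‖Complex.exp (((lam.re : ℂ) - x) * s) - 1‖
        ≤ 2 * ‖((lam.re : ℂ) - x) * s‖ :=
          Complex.norm_exp_sub_one_le (le_trans habs hk)
      _ ≤ 2 * |lam.re - x| := by linarith
  calc ‖Complex.exp (zeta * s)‖ * ‖Complex.exp (((lam.re : ℂ) - x) * s) - 1‖
      ≤ Real.exp |x| * (2 * |lam.re - x|) :=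
        mul_le_mul h1 h2 (norm_nonneg _) (Real.exp_pos _).le

/-- Riemann–Lebesgue along a vertical sequence with converging real parts. -/
lemma G_tendsto_zero {a : ℝ → ℂ} (ha : Integrable a μ₀) (lam : ℕ → ℂ) (x : ℝ)
    (hre : Tendsto (fun k => (lam k).re) atTop (𝓝 x))
    (him : Tendsto (fun k => |(lam k).im|) atTop atTop) :
    Tendsto (fun k => G a (lam k)) atTop (𝓝 0) := by
  set zeta : ℕ → ℂ := fun k => (x : ℂ) + (lam k).im * I with hzeta
  -- Term 1: Riemann-Lebesgue
  have hterm1 : Tendsto (fun k => G a (zeta k)) atTop (𝓝 0) := by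
    set f : ℝ → ℂ := (Set.Ioc (-1:ℝ) 0).indicator (fun s => Complex.exp ((x:ℂ) * s) * a s)
      with hf
    have RL := Real.tendsto_integral_exp_smul_cocompact f
    have hw : Tendsto (fun k => -(lam k).im / (2 * Real.pi)) atTop (cocompact ℝ) := by
      rw [← Metric.cobounded_eq_cocompact, ← tendsto_norm_atTop_iff_cobounded]
      have heq : ∀ k, ‖-(lam k).im / (2 * Real.pi)‖ = |(lam k).im| * (2 * Real.pi)⁻¹ := by
        intro k
        rw [norm_div, norm_neg, Real.norm_eq_abs, Real.norm_eq_abs, div_eq_mul_inv,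
          abs_of_pos (by positivity : (0:ℝ) < 2 * Real.pi)]
      simp only [heq]
      exact him.atTop_mul_const (by positivity)
    have hcomp := RL.comp hw
    refine hcomp.congr fun k => ?_
    show ∫ v : ℝ, (Real.fourierChar (-(v * (-(lam k).im / (2 * Real.pi))))) • f v
        = G a (zeta k)
    rw [G, ← integral_indicator measurableSet_Ioc]
    congr 1
    funext v
    rw [Circle.smul_def, smul_eq_mul, hf]
    rcases Classical.em (v ∈ Set.Ioc (-1:ℝ) 0) with hv | hv
    · have harg : 2 * Real.pi * (-(v * (-(lam k).im / (2 * Real.pi)))) = v * (lam k).im := by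
        have hpi : (Real.pi : ℝ) ≠ 0 := Real.pi_ne_zero
        field_simp
      rw [Set.indicator_of_mem hv, Set.indicator_of_mem hv, Real.fourierChar_apply, harg,
        ← mul_assoc, ← Complex.exp_add]
      congr 2
      push_cast
      ring
    · rw [Set.indicator_of_notMem hv, Set.indicator_of_notMem hv, mul_zero]
  -- Term 2: difference estimate
  have hxk : Tendsto (fun k => |(lam k).re - x|) atTop (𝓝 0) := by
    have h := hre.sub_const x
    rw [show (x - x : ℝ) = 0 by ring] at h
    simpa using h.abs
  have hdiff : Tendsto (fun k => G a (lam k) - G a (zeta k)) atTop (𝓝 0) := by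
    refine squeeze_zero_norm' ?_ ?_
      (a := fun k => Real.exp |x| * (2 * |(lam k).re - x|) * ∫ s in Set.Ioc (-1:ℝ) 0, ‖a s‖)
    · have hev : ∀ᶠ k in atTop, |(lam k).re - x| ≤ 1 := by
        filter_upwards [hxk.eventually_lt_const (by norm_num : (0:ℝ) < 1)] with k hk
        exact le_of_lt hk
      filter_upwards [hev] with k hk
      have hsub : G a (lam k) - G a (zeta k)
          = ∫ s in Set.Ioc (-1:ℝ) 0,
              (Complex.exp (lam k * s) - Complex.exp (zeta k * s)) * a s := by
        rw [G, G, ← integral_sub (integrable_exp_mul ha _) (integrable_exp_mul ha _)]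
        congr 1; funext s; ring
      rw [hsub]
      calc ‖∫ s in Set.Ioc (-1:ℝ) 0,
              (Complex.exp (lam k * s) - Complex.exp (zeta k * s)) * a s‖
          ≤ ∫ s in Set.Ioc (-1:ℝ) 0,
              (Real.exp |x| * (2 * |(lam k).re - x|)) * ‖a s‖ := by
            refine norm_integral_le_of_norm_le (ha.norm.const_mul _) ?_
            filter_upwards [ae_restrict_mem measurableSet_Ioc] with s hs
            rw [norm_mul]
            exact mul_le_mul_of_nonneg_right (exp_diff_bound hk hs) (norm_nonneg _)
        _ = Real.exp |x| * (2 * |(lam k).re - x|) * ∫ s in Set.Ioc (-1:ℝ) 0, ‖a s‖ :=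
            integral_const_mul _ _
    · have h := (((hxk.const_mul (2:ℝ)).const_mul (Real.exp |x|)).mul_const
        (∫ s in Set.Ioc (-1:ℝ) 0, ‖a s‖))
      simpa using h
  have hsum := hterm1.add hdiff
  rw [add_zero] at hsum
  refine hsum.congr fun k => ?_
  ring

section Diff
variable {n : ℕ} (Am1 : Matrix (Fin n) (Fin n) ℂ) (A2 A3 : ℝ → Matrix (Fin n) (Fin n) ℂ)

lemma delta_entry_diff
    (h2 : ∀ i j, Integrable (fun s => A2 s i j) μ₀)
    (h3 : ∀ i j, Integrable (fun s => A3 s i j) μ₀) (i j : Fin n) :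
    Differentiable ℂ (fun lam => Delta Am1 A2 A3 lam i j) := by
  have e1 : (fun lam => Delta Am1 A2 A3 lam i j)
      = fun lam => (-lam) * (1 : Matrix (Fin n) (Fin n) ℂ) i j
          + (lam * Complex.exp (-lam)) * Am1 i j
          + lam * G (fun s => A2 s i j) lam
          + G (fun s => A3 s i j) lam := by
    funext lam
    simp [Delta, Matrix.add_apply, Matrix.smul_apply, smul_eq_mul, G, Matrix.of_apply]
  rw [e1]
  refine (((((differentiable_id.neg).mul_const _).add
    ((differentiable_id.mul (Complex.differentiable_exp.comp differentiable_neg)).mul_const _)).add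
    (differentiable_id.mul (G_differentiable (h2 i j)))).add
    (G_differentiable (h3 i j)))

lemma F_differentiable
    (h2 : ∀ i j, Integrable (fun s => A2 s i j) μ₀)
    (h3 : ∀ i j, Integrable (fun s => A3 s i j) μ₀) :
    Differentiable ℂ (fun lam => (Delta Am1 A2 A3 lam).det) := by
  have e1 : (fun lam => (Delta Am1 A2 A3 lam).det)
      = fun lam => ∑ σ : Equiv.Perm (Fin n),
          ((Equiv.Perm.sign σ : ℤ) : ℂ) * ∏ i, Delta Am1 A2 A3 lam (σ i) i := by
    funext lam
    rw [Matrix.det_apply]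
    congr 1
    funext σ
    simp [Units.smul_def, zsmul_eq_mul]
  rw [e1]
  apply Differentiable.fun_sum
  intro σ _
  exact (Differentiable.fun_finsetProd
    (fun i _ => delta_entry_diff Am1 A2 A3 h2 h3 (σ i) i)).const_mul _

/-- factorization for nonzero `lam` -/
lemma delta_factor (lam : ℂ) (hlam : lam ≠ 0) :
    Delta Am1 A2 A3 lam = lam •
      (Complex.exp (-lam) • Am1 - 1
        + Matrix.of (fun i j => G (fun s => A2 s i j) lam)
        + lam⁻¹ • Matrix.of (fun i j => G (fun s => A3 s i j) lam)) := by
  rw [Delta]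
  simp only [G]
  rw [smul_add, smul_add, smul_sub, smul_smul, smul_smul, mul_inv_cancel₀ hlam, one_smul]
  rw [neg_smul]
  abel

end Diff

lemma eps_choice (Am1 : Matrix (Fin n) (Fin n) ℂ) (c : ℝ)
    (hc : ∀ μ ∈ spectrum ℂ Am1, c ≠ Real.log (‖μ‖)) :
    ∃ ε : ℝ, 0 < ε ∧ ∀ μ ∈ spectrum ℂ Am1, ∀ x : ℝ, |x - c| ≤ ε →
      Real.log (‖μ‖) ≠ x := by
  have hfin : (spectrum ℂ Am1).Finite := Matrix.finite_spectrum Am1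
  set T : Finset ℝ := hfin.toFinset.image (fun μ => |Real.log (‖μ‖) - c|) with hT
  have hpos : ∀ r ∈ T, 0 < r := by
    intro r hr
    rw [hT, Finset.mem_image] at hr
    obtain ⟨μ, hμ, rfl⟩ := hr
    rw [Set.Finite.mem_toFinset] at hμ
    have := hc μ hμ
    rw [abs_pos, sub_ne_zero]
    exact fun h => this h.symm
  by_cases hne : T.Nonempty
  · refine ⟨T.min' hne / 2, by linarith [hpos _ (T.min'_mem hne)], ?_⟩
    intro μ hμ x hx heq
    have hmem : |Real.log (‖μ‖) - c| ∈ T := by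
      rw [hT, Finset.mem_image]
      exact ⟨μ, (Set.Finite.mem_toFinset _).2 hμ, rfl⟩
    have h1 := T.min'_le _ hmem
    have h2 : T.min' hne ≤ |x - c| := by rw [← heq]; exact h1
    linarith [hpos _ (T.min'_mem hne)]
  · refine ⟨1, one_pos, ?_⟩
    intro μ hμ x _ _
    refine hne ⟨|Real.log (‖μ‖) - c|, ?_⟩
    rw [hT, Finset.mem_image]
    exact ⟨μ, (Set.Finite.mem_toFinset _).2 hμ, rfl⟩

lemma det_limit_ne_zero (Am1 : Matrix (Fin n) (Fin n) ℂ) (c ε : ℝ)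
    (P : ∀ μ ∈ spectrum ℂ Am1, ∀ x : ℝ, |x - c| ≤ ε → Real.log (‖μ‖) ≠ x)
    (x : ℝ) (hx : |x - c| ≤ ε) (w : ℂ) (hw : ‖w‖ = Real.exp (-x)) :
    (w • Am1 - 1).det ≠ 0 := by
  intro h0
  have hwne : w ≠ 0 := by
    intro h; rw [h] at hw; simp at hw
    exact absurd hw.symm (Real.exp_pos _).ne'
  have heq : w • Am1 - 1 = (-w) • (w⁻¹ • (1 : Matrix (Fin n) (Fin n) ℂ) - Am1) := by
    rw [smul_sub, smul_smul, neg_mul, mul_inv_cancel₀ hwne, neg_smul, neg_smul, one_smul,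
      sub_neg_eq_add]
    abel
  rw [heq, Matrix.det_smul] at h0
  have hdetM : (w⁻¹ • (1 : Matrix (Fin n) (Fin n) ℂ) - Am1).det = 0 := by
    have hne : (-w) ^ Fintype.card (Fin n) ≠ 0 := pow_ne_zero _ (neg_ne_zero.2 hwne)
    exact (mul_eq_zero.1 h0).resolve_left hne
  have hspec : w⁻¹ ∈ spectrum ℂ Am1 := by
    rw [spectrum.mem_iff, Algebra.algebraMap_eq_smul_one]
    intro hU
    have := (Matrix.isUnit_iff_isUnit_det _).1 hU
    rw [hdetM] at this
    exact this.ne_zero rfl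
  refine P w⁻¹ hspec x hx ?_
  rw [norm_inv, hw, Real.log_inv, Real.log_exp]
  ring

section Key
variable {n : ℕ} (Am1 : Matrix (Fin n) (Fin n) ℂ) (A2 A3 : ℝ → Matrix (Fin n) (Fin n) ℂ)

lemma key (c ε : ℝ) (hε : 0 < ε)
    (P : ∀ μ ∈ spectrum ℂ Am1, ∀ x : ℝ, |x - c| ≤ ε → Real.log (‖μ‖) ≠ x)
    (h2 : ∀ i j, Integrable (fun s => A2 s i j) μ₀)
    (h3 : ∀ i j, Integrable (fun s => A3 s i j) μ₀)
    (u : ℕ → ℂ) (hu0 : ∀ k, (Delta Am1 A2 A3 (u k)).det = 0)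
    (hustrip0 : ∀ k, |(u k).re - c| ≤ ε) (huim : ∀ k : ℕ, (k : ℝ) + 1 ≤ |(u k).im|) : False := by
  have hustrip := hustrip0
  -- first subsequence: real parts converge
  have hmem : ∀ k, (u k).re ∈ Set.Icc (c - ε) (c + ε) := by
    intro k
    have := hustrip k
    rw [abs_le] at this
    exact ⟨by linarith [this.1], by linarith [this.2]⟩
  obtain ⟨x, hxIcc, φ₁, hφ₁, hre1⟩ := (isCompact_Icc (a := c - ε) (b := c + ε)).tendsto_subseq hmem
  -- second subsequence: exp(-u) converges
  set R : ℝ := Real.exp (|c| + ε) with hR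
  have hball : ∀ k, Complex.exp (-(u (φ₁ k))) ∈ Metric.closedBall (0:ℂ) R := by
    intro k
    rw [Metric.mem_closedBall, dist_zero_right, Complex.norm_exp, hR]
    apply Real.exp_le_exp.2
    have h1 := hustrip (φ₁ k)
    have h2 := abs_sub_abs_le_abs_sub (u (φ₁ k)).re c
    have h3 := neg_abs_le (u (φ₁ k)).re
    simp only [Complex.neg_re]
    have : |(u (φ₁ k)).re| ≤ |c| + ε := by
      have := abs_sub_le (u (φ₁ k)).re c 0
      simp only [sub_zero] at this
      linarith
    linarith
  obtain ⟨w, hwball, φ₂, hφ₂, hw⟩ :=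
    (isCompact_closedBall (0:ℂ) R).tendsto_subseq hball
  set ψ : ℕ → ℕ := φ₁ ∘ φ₂ with hψdef
  have hψ : StrictMono ψ := hφ₁.comp hφ₂
  set lam : ℕ → ℂ := fun k => u (ψ k) with hlamdef
  have hre : Tendsto (fun k => (lam k).re) atTop (𝓝 x) := hre1.comp hφ₂.tendsto_atTop
  have hexp : Tendsto (fun k => Complex.exp (-(lam k))) atTop (𝓝 w) := hw
  have him : Tendsto (fun k => |(lam k).im|) atTop atTop := by
    refine tendsto_atTop_mono (fun k => ?_) tendsto_natCast_atTop_atTop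
    calc (k : ℝ) ≤ (ψ k : ℝ) + 1 := by
          have h := (Nat.cast_le (α := ℝ)).2 (hψ.le_apply (x := k)); linarith
      _ ≤ |(u (ψ k)).im| := huim (ψ k)
  have hlamne : ∀ k, lam k ≠ 0 := by
    intro k hk
    have h1 := huim (ψ k)
    have h2 : |(u (ψ k)).im| = 0 := by
      show |(lam k).im| = 0
      rw [hk]; simp
    rw [h2] at h1
    linarith [(Nat.cast_nonneg (ψ k) : (0:ℝ) ≤ (ψ k : ℝ))]
  have hwabs : ‖w‖ = Real.exp (-x) := by
    have h1 : Tendsto (fun k => ‖Complex.exp (-(lam k))‖) atTop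
        (𝓝 (‖w‖)) := (continuous_norm.tendsto w).comp hexp
    have h2 : (fun k => ‖Complex.exp (-(lam k))‖)
        = fun k => Real.exp (-(lam k).re) := by
      funext k; rw [Complex.norm_exp, Complex.neg_re]
    have h3 : Tendsto (fun k => Real.exp (-(lam k).re)) atTop (𝓝 (Real.exp (-x))) :=
      (Real.continuous_exp.tendsto _).comp hre.neg
    rw [h2] at h1
    exact tendsto_nhds_unique h1 h3
  -- the normalized matrices
  set N : ℂ → Matrix (Fin n) (Fin n) ℂ := fun z =>
    Complex.exp (-z) • Am1 - 1
      + Matrix.of (fun i j => G (fun s => A2 s i j) z)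
      + z⁻¹ • Matrix.of (fun i j => G (fun s => A3 s i j) z) with hNdef
  have hdetN : ∀ k, (N (lam k)).det = 0 := by
    intro k
    have h0 := hu0 (ψ k)
    rw [delta_factor Am1 A2 A3 (lam k) (hlamne k), Matrix.det_smul] at h0
    exact (mul_eq_zero.1 h0).resolve_left (pow_ne_zero _ (hlamne k))
  have hnormlam : ∀ k : ℕ, ((k:ℝ) + 1) ≤ ‖lam k‖ := by
    intro k
    calc (k:ℝ) + 1 ≤ (ψ k : ℝ) + 1 := by
          have h := (Nat.cast_le (α := ℝ)).2 (hψ.le_apply (x := k)); linarith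
      _ ≤ |(lam k).im| := huim (ψ k)
      _ ≤ ‖lam k‖ := Complex.abs_im_le_norm _
  have hstripk : ∀ k, |(lam k).re| ≤ |c| + ε := by
    intro k
    have h1 := hustrip (ψ k)
    have := abs_sub_le (lam k).re c 0
    simp only [sub_zero] at this
    linarith
  have hNtend : Tendsto (fun k => N (lam k)) atTop (𝓝 (w • Am1 - 1)) := by
    have T1 : Tendsto (fun k => Complex.exp (-(lam k)) • Am1 - 1) atTop
        (𝓝 (w • Am1 - 1)) := (hexp.smul_const Am1).sub_const 1
    have T2 : Tendsto (fun k => Matrix.of (fun i j => G (fun s => A2 s i j) (lam k)))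
        atTop (𝓝 (0 : Matrix (Fin n) (Fin n) ℂ)) := by
      refine tendsto_pi_nhds.2 fun i => tendsto_pi_nhds.2 fun j => ?_
      exact G_tendsto_zero (h2 i j) lam x hre him
    have T3 : Tendsto (fun k => (lam k)⁻¹ • Matrix.of
        (fun i j => G (fun s => A3 s i j) (lam k)))
        atTop (𝓝 (0 : Matrix (Fin n) (Fin n) ℂ)) := by
      refine tendsto_pi_nhds.2 fun i => tendsto_pi_nhds.2 fun j => ?_
      have hC : ∀ k, ‖(lam k)⁻¹ * G (fun s => A3 s i j) (lam k)‖
          ≤ (1 / ((k:ℝ) + 1)) * (Real.exp (|c| + ε)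
              * ∫ s in Set.Ioc (-1:ℝ) 0, ‖A3 s i j‖) := by
        intro k
        rw [norm_mul]
        have hb1 : ‖(lam k)⁻¹‖ ≤ 1 / ((k:ℝ) + 1) := by
          rw [norm_inv, one_div]
          exact inv_anti₀ (by positivity) (hnormlam k)
        have hb2 : ‖G (fun s => A3 s i j) (lam k)‖
            ≤ Real.exp (|c| + ε) * ∫ s in Set.Ioc (-1:ℝ) 0, ‖A3 s i j‖ := by
          refine le_trans (G_norm_le (h3 i j) (lam k)) ?_
          have hnn : 0 ≤ ∫ s in Set.Ioc (-1:ℝ) 0, ‖A3 s i j‖ :=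
            integral_nonneg fun s => norm_nonneg _
          exact mul_le_mul_of_nonneg_right (Real.exp_le_exp.2 (hstripk k)) hnn
        exact mul_le_mul hb1 hb2 (norm_nonneg _) (by positivity)
      have htend0 : Tendsto (fun k : ℕ => (1 / ((k:ℝ) + 1)) * (Real.exp (|c| + ε)
          * ∫ s in Set.Ioc (-1:ℝ) 0, ‖A3 s i j‖)) atTop (𝓝 0) := by
        have := tendsto_one_div_add_atTop_nhds_zero_nat.mul_const
          (Real.exp (|c| + ε) * ∫ s in Set.Ioc (-1:ℝ) 0, ‖A3 s i j‖)
        simpa using this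
      exact squeeze_zero_norm hC htend0
    have := (T1.add T2).add T3
    rw [add_zero, add_zero] at this
    refine this.congr fun k => ?_
    rw [hNdef]
  have hdet0 : (w • Am1 - 1).det = 0 := by
    have hcont : Continuous (fun M : Matrix (Fin n) (Fin n) ℂ => M.det) :=
      Continuous.matrix_det continuous_id
    have h1 : Tendsto (fun k => (N (lam k)).det) atTop (𝓝 ((w • Am1 - 1).det)) :=
      (hcont.tendsto _).comp hNtend
    have h2 : Tendsto (fun k => (N (lam k)).det) atTop (𝓝 0) := by
      rw [show (fun k => (N (lam k)).det) = fun _ => (0:ℂ) from funext hdetN]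
      exact tendsto_const_nhds
    exact tendsto_nhds_unique h1 h2
  have hxabs : |x - c| ≤ ε := by
    rw [abs_le]
    exact ⟨by linarith [hxIcc.1], by linarith [hxIcc.2]⟩
  exact det_limit_ne_zero Am1 c ε P x hxabs w hwabs hdet0
end Key

end NeutralAux

open NeutralAux in
theorem finitely_many_zeros_in_strip
    (n : ℕ) (hn : 0 < n) (Am1 : Matrix (Fin n) (Fin n) ℂ)
    (hinv : IsUnit Am1)
    (A2 A3 : ℝ → Matrix (Fin n) (Fin n) ℂ)
    (hA2 : ∀ i j, MeasureTheory.MemLp (fun θ => A2 θ i j) 2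
      (volume.restrict (Set.Ioc (-1:ℝ) 0)))
    (hA3 : ∀ i j, MeasureTheory.MemLp (fun θ => A3 θ i j) 2
      (volume.restrict (Set.Ioc (-1:ℝ) 0)))
    (c : ℝ) (hc : ∀ μ ∈ spectrum ℂ Am1, c ≠ Real.log ‖μ‖) :
    ∃ ε : ℝ, 0 < ε ∧
      {lam : ℂ | (Delta Am1 A2 A3 lam).det = 0 ∧ |lam.re - c| ≤ ε}.Finite := by
  haveI := finite_mu0
  have h2 : ∀ i j, Integrable (fun s => A2 s i j)
      (volume.restrict (Set.Ioc (-1:ℝ) 0)) := fun i j =>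
    memLp_one_iff_integrable.1 ((hA2 i j).mono_exponent one_le_two)
  have h3 : ∀ i j, Integrable (fun s => A3 s i j)
      (volume.restrict (Set.Ioc (-1:ℝ) 0)) := fun i j =>
    memLp_one_iff_integrable.1 ((hA3 i j).mono_exponent one_le_two)
  obtain ⟨ε, hε, P⟩ := eps_choice Am1 c hc
  refine ⟨ε, hε, ?_⟩
  set Z : Set ℂ := {lam : ℂ | (Delta Am1 A2 A3 lam).det = 0 ∧ |lam.re - c| ≤ ε} with hZ
  -- a bound on imaginary parts of zeros in the strip
  have hT : ∃ T : ℕ, ∀ lam ∈ Z, |lam.im| < (T:ℝ) + 1 := by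
    by_contra h
    push_neg at h
    have h' : ∀ T : ℕ, ∃ lam, lam ∈ Z ∧ (T:ℝ) + 1 ≤ |lam.im| := by
      intro T
      obtain ⟨lam, hl1, hl2⟩ := h T
      exact ⟨lam, hl1, hl2⟩
    choose u hu1 hu2 using h'
    exact key Am1 A2 A3 c ε hε P h2 h3 u (fun k => (hu1 k).1) (fun k => (hu1 k).2) hu2
  obtain ⟨T0, hT0⟩ := hT
  -- the compact rectangle
  set K : Set ℂ := {z : ℂ | |z.re - c| ≤ ε} ∩ {z : ℂ | |z.im| ≤ (T0:ℝ) + 1} with hK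
  have hZK : Z ⊆ K := by
    intro z hz
    exact ⟨hz.2, (hT0 z hz).le⟩
  have hKcomp : IsCompact K := by
    refine Metric.isCompact_of_isClosed_isBounded ?_ ?_
    · refine IsClosed.inter ?_ ?_
      · exact isClosed_le ((Complex.continuous_re.sub continuous_const).abs) continuous_const
      · exact isClosed_le (Complex.continuous_im.abs) continuous_const
    · rw [isBounded_iff_forall_norm_le]
      refine ⟨(|c| + ε) + ((T0:ℝ) + 1), fun z hz => ?_⟩
      have h1 : |z.re| ≤ |c| + ε := by
        have := abs_sub_le z.re c 0
        simp only [sub_zero] at this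
        have hz1 : |z.re - c| ≤ ε := hz.1
        linarith
      calc ‖z‖ ≤ |z.re| + |z.im| := Complex.norm_le_abs_re_add_abs_im z
        _ ≤ (|c| + ε) + ((T0:ℝ) + 1) := add_le_add h1 hz.2
  -- a point in the strip where F is nonzero
  set lam0 : ℂ := (c : ℂ) + ((T0:ℝ) + 2) * I with hlam0
  have hlam0re : lam0.re = c := by simp [hlam0]
  have hlam0im : lam0.im = (T0:ℝ) + 2 := by simp [hlam0]
  have hF0 : (Delta Am1 A2 A3 lam0).det ≠ 0 := by
    intro h0
    have hmem : lam0 ∈ Z := ⟨h0, by rw [hlam0re]; simpa using hε.le⟩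
    have := hT0 lam0 hmem
    rw [hlam0im] at this
    rw [_root_.abs_of_nonneg (by positivity)] at this
    linarith
  -- finiteness via the identity theorem
  by_contra hinf
  have hinfZ : Z.Infinite := hinf
  set e := hinfZ.natEmbedding with he
  have hmemK : ∀ k : ℕ, ((e k : ℂ)) ∈ K := fun k => hZK (e k).2
  obtain ⟨z₀, hz₀K, φ, hφ, htend⟩ := hKcomp.tendsto_subseq hmemK
  have hv_inj : Function.Injective (fun k => ((e (φ k) : ℂ))) := by
    intro a b hab
    exact hφ.injective (e.injective (Subtype.coe_injective hab))
  have hv_ne : ∀ᶠ k in atTop, ((e (φ k) : ℂ)) ≠ z₀ := by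
    have hfin : {k : ℕ | ((e (φ k) : ℂ)) = z₀}.Finite := by
      refine Set.Subsingleton.finite ?_
      intro a ha b hb
      exact hv_inj (ha.trans hb.symm)
    have := hfin.eventually_cofinite_notMem
    rw [Nat.cofinite_eq_atTop] at this
    filter_upwards [this] with k hk
    exact hk
  have htez : Tendsto (fun k => ((e (φ k) : ℂ))) atTop (𝓝[≠] z₀) := by
    rw [tendsto_nhdsWithin_iff]
    exact ⟨htend, hv_ne.mono fun k hk => hk⟩
  have hfreq : ∃ᶠ z in 𝓝[≠] z₀, (Delta Am1 A2 A3 z).det = 0 :=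
    htez.frequently (Frequently.of_forall fun k => ((e (φ k)).2).1)
  have hzero : Set.EqOn (fun lam => (Delta Am1 A2 A3 lam).det) 0 Set.univ := by
    refine AnalyticOnNhd.eqOn_zero_of_preconnected_of_frequently_eq_zero
      ?_ isPreconnected_univ (Set.mem_univ z₀) hfreq
    exact ((F_differentiable Am1 A2 A3 h2 h3).differentiableOn).analyticOnNhd isOpen_univ
  exact hF0 (hzero (Set.mem_univ lam0))
end
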